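/- arXiv:1212.4063 — 13 statements merged into one kernel-verified Lean document; each statement's English description precedes it below -/
import Mathlib

section
/- If P is a nonzero Poisson prime ideal of B = A[z], then Q = P ∩ A is a nonzero δ-prime ideal of A. -/
open Polynomial

/-- A Poisson bracket on a commutative `ℂ`-algebra `B`. -/
structure IsPoissonBracket {B : Type*} [CommRing B] [Algebra ℂ B]
    (br : B → B → B) : Prop where
  add_left : ∀ a b c : B, br (a + b) c = br a c + br b c
  smul_left : ∀ (r : ℂ) (a b : B), br (r • a) b = r • br a b
  antisymm : ∀ a b : B, br a b = - br b a
  jacobi : ∀ a b c : B, br a (br b c) + br b (br c a) + br c (br a b) = 0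
  leibniz : ∀ a b c : B, br a (b * c) = br a b * c + b * br a c

/-- The Poisson bracket `{-,-}_δ` on `A[z]`: zero on `A` and `{z,a} = δ a`. -/
def IsDeltaBracket {A : Type*} [CommRing A] [Algebra ℂ A] (δ : Derivation ℂ A A)
    (br : Polynomial A → Polynomial A → Polynomial A) : Prop :=
  IsPoissonBracket br ∧ (∀ a b : A, br (Polynomial.C a) (Polynomial.C b) = 0) ∧
    (∀ a : A, br Polynomial.X (Polynomial.C a) = Polynomial.C (δ a))

/-- `I` is a Poisson ideal for the bracket `br`. -/
def IsPoissonIdeal {B : Type*} [CommRing B] (br : B → B → B) (I : Ideal B) : Prop :=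
  ∀ b : B, ∀ i ∈ I, br b i ∈ I

/-- `I` is a `δ`-ideal. -/
def IsDeltaIdeal {A : Type*} [CommRing A] [Algebra ℂ A] (δ : Derivation ℂ A A)
    (I : Ideal A) : Prop :=
  ∀ a ∈ I, δ a ∈ I

/-- `P` is a `δ`-prime ideal. -/
def IsDeltaPrime {A : Type*} [CommRing A] [Algebra ℂ A] (δ : Derivation ℂ A A)
    (P : Ideal A) : Prop :=
  P ≠ ⊤ ∧ IsDeltaIdeal δ P ∧
    ∀ I J : Ideal A, IsDeltaIdeal δ I → IsDeltaIdeal δ J → I * J ≤ P → I ≤ P ∨ J ≤ P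

theorem stmt_3 {A : Type*} [CommRing A] [Algebra ℂ A] [IsDomain A] [IsNoetherianRing A]
    (δ : Derivation ℂ A A) (hδ : δ ≠ 0)
    (br : Polynomial A → Polynomial A → Polynomial A) (hbr : IsDeltaBracket δ br)
    (P : Ideal (Polynomial A)) (hP : P.IsPrime) (hPois : IsPoissonIdeal br P) (hP0 : P ≠ ⊥) :
    P.comap (Polynomial.C : A →+* Polynomial A) ≠ ⊥ ∧
      IsDeltaPrime δ (P.comap (Polynomial.C : A →+* Polynomial A)) := by

  obtain ⟨hpb, hCC, hXC⟩ := hbr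
  have hadd_r : ∀ a x y : Polynomial A, br a (x + y) = br a x + br a y := by
    intro a x y
    rw [hpb.antisymm a (x + y), hpb.add_left, neg_add, ← hpb.antisymm, ← hpb.antisymm]
  have hCX : ∀ a : A, br (C a) X = -(C (δ a)) := by
    intro a; rw [hpb.antisymm, hXC]
  have hCpow : ∀ (a : A) (k : ℕ),
      br (C a) (X ^ k) = -(C (δ a)) * derivative (X ^ k : Polynomial A) := by
    intro a k
    induction k with
    | zero => rw [pow_zero, ← C_1, hCC]; simp
    | succ k ih =>
      rw [pow_succ, hpb.leibniz, ih, hCX a, derivative_mul, derivative_X]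
      ring
  have hCf : ∀ (a : A) (f : Polynomial A), br (C a) f = -(C (δ a)) * derivative f := by
    intro a f
    induction f using Polynomial.induction_on' with
    | add p q hp hq => rw [hadd_r, hp, hq, derivative_add]; ring
    | monomial n b =>
      rw [← C_mul_X_pow_eq_monomial, hpb.leibniz, hCC, hCpow, derivative_mul, derivative_C]
      ring
  set Q := P.comap (C : A →+* Polynomial A) with hQdef
  have hQprime : Q.IsPrime := hP.comap _
  have hQδ : IsDeltaIdeal δ Q := by
    intro a ha
    have h1 : br X (C a) ∈ P := hPois X _ ha
    rw [hXC] at h1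
    exact h1
  have hCZ : CharZero A := charZero_of_injective_algebraMap (algebraMap ℂ A).injective
  refine ⟨?_, hQprime.ne_top, hQδ, ?_⟩
  · intro hbot
    obtain ⟨a, ha⟩ : ∃ a, δ a ≠ 0 := by
      by_contra h; push_neg at h
      exact hδ (by ext x; simpa using h x)
    have hCa : (C (δ a) : Polynomial A) ∉ P := by
      intro h
      have h2 : δ a ∈ Q := h
      rw [hbot] at h2
      exact ha (Ideal.mem_bot.mp h2)
    have key : ∀ n, ∀ f : Polynomial A, f.natDegree = n → f ∈ P → f ≠ 0 → False := by
      intro n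
      induction n using Nat.strong_induction_on with
      | _ n ih =>
        intro f hdeg hfP hf0
        by_cases h0 : f.natDegree = 0
        · have hfeq : f = C (f.coeff 0) := Polynomial.eq_C_of_natDegree_le_zero (le_of_eq h0)
          have hc : f.coeff 0 ∈ Q := by rw [hfeq] at hfP; exact hfP
          rw [hbot] at hc
          exact hf0 (by rw [hfeq, Ideal.mem_bot.mp hc, map_zero])
        · have h1 : br (C a) f ∈ P := hPois _ _ hfP
          rw [hCf] at h1
          have h2 : C (δ a) * derivative f ∈ P := by
            have h3 := P.neg_mem h1
            simpa using h3
          have h3 : derivative f ∈ P := (hP.mem_or_mem h2).resolve_left hCa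
          have h4 : derivative f ≠ 0 := fun h =>
            h0 (Polynomial.natDegree_eq_zero_of_derivative_eq_zero h)
          have h5 : (derivative f).natDegree < n :=
            hdeg ▸ Polynomial.natDegree_derivative_lt h0
          exact ih _ h5 _ rfl h3 h4
    obtain ⟨f, hfP, hf0⟩ := Submodule.ne_bot_iff P |>.mp hP0
    exact key _ f rfl hfP hf0
  · intro I J _ _ hIJ
    exact hQprime.mul_le.mp hIJ
end

section
/- Let P be a nonzero Poisson prime ideal of B = A[z] and Q = P ∩ A. If δ(A) ⊄ Q then P = QB. -/
open Polynomial

lemma br_C_eq {A : Type*} [CommRing A] [Algebra ℂ A] (δ : Derivation ℂ A A)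
    (br : Polynomial A → Polynomial A → Polynomial A) (hbr : IsDeltaBracket δ br)
    (a : A) (f : Polynomial A) :
    br (Polynomial.C a) f = -(Polynomial.C (δ a) * derivative f) := by
  obtain ⟨hb, hCC, hXC⟩ := hbr
  have hadd : ∀ x y z : Polynomial A, br z (x + y) = br z x + br z y := by
    intro x y z
    rw [hb.antisymm, hb.add_left, hb.antisymm x, hb.antisymm y]; ring
  have hCX : br (Polynomial.C a) Polynomial.X = -Polynomial.C (δ a) := by
    rw [hb.antisymm, hXC]
  have hpow : ∀ n : ℕ, br (Polynomial.C a) (Polynomial.X ^ n)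
      = -(Polynomial.C (δ a) * derivative (Polynomial.X ^ n : Polynomial A)) := by
    intro n
    induction n with
    | zero =>
        simp only [pow_zero]
        rw [← Polynomial.C_1, hCC]
        simp
    | succ n ih =>
        rw [pow_succ, hb.leibniz, ih, hCX, derivative_mul, derivative_X]
        ring
  induction f using Polynomial.induction_on' with
  | add p q hp hq => rw [hadd, hp, hq, derivative_add]; ring
  | monomial n b =>
      rw [← Polynomial.C_mul_X_pow_eq_monomial, hb.leibniz, hCC, hpow, derivative_mul,
        derivative_C]
      ring

theorem stmt_4 {A : Type*} [CommRing A] [Algebra ℂ A] [IsDomain A] [IsNoetherianRing A]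
    (δ : Derivation ℂ A A) (hδ : δ ≠ 0)
    (br : Polynomial A → Polynomial A → Polynomial A) (hbr : IsDeltaBracket δ br)
    (P : Ideal (Polynomial A)) (hP : P.IsPrime) (hPois : IsPoissonIdeal br P) (hP0 : P ≠ ⊥)
    (hnot : ¬ ∀ a : A, δ a ∈ P.comap (Polynomial.C : A →+* Polynomial A)) :
    P = (P.comap (Polynomial.C : A →+* Polynomial A)).map
      (Polynomial.C : A →+* Polynomial A) := by
  set Q := P.comap (Polynomial.C : A →+* Polynomial A) with hQ
  obtain ⟨a, ha⟩ := not_forall.mp hnot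
  have haP : Polynomial.C (δ a) ∉ P := ha
  -- derivative of a member of P is in P
  have hder : ∀ f ∈ P, derivative f ∈ P := by
    intro f hf
    have h1 : br (Polynomial.C a) f ∈ P := hPois _ f hf
    rw [br_C_eq δ br hbr] at h1
    have h2 : Polynomial.C (δ a) * derivative f ∈ P := by
      simpa using P.neg_mem h1
    rcases hP.mem_or_mem h2 with h | h
    · exact absurd h haP
    · exact h
  have hQP : Q.IsPrime := Ideal.IsPrime.comap _
  -- all coefficients of members of P lie in Q
  have key : ∀ n : ℕ, ∀ f : Polynomial A, f.natDegree ≤ n → f ∈ P →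
      ∀ i, f.coeff i ∈ Q := by
    intro n
    induction n with
    | zero =>
        intro f hdeg hf i
        have hfc : f = Polynomial.C (f.coeff 0) :=
          Polynomial.eq_C_of_natDegree_le_zero hdeg
        rcases i with _ | i
        · rw [hQ, Ideal.mem_comap]; rw [← hfc]; exact hf
        · have : f.coeff (i + 1) = 0 := by
            rw [hfc]; simp
          rw [this]; exact Q.zero_mem
    | succ n ih =>
        intro f hdeg hf i
        have hdf : (derivative f).natDegree ≤ n := by
          have := Polynomial.natDegree_derivative_le f
          omega
        have hdfP := hder f hf
        have hcoeffs : ∀ j, f.coeff (j + 1) ∈ Q := by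
          intro j
          have h1 : (derivative f).coeff j ∈ Q := ih _ hdf hdfP j
          rw [Polynomial.coeff_derivative] at h1
          have hu : IsUnit ((j : A) + 1) := by
            have : ((j : A) + 1) = algebraMap ℂ A ((j : ℂ) + 1) := by
              push_cast; simp
            rw [this]
            refine IsUnit.map _ (isUnit_iff_ne_zero.mpr ?_)
            exact Nat.cast_add_one_ne_zero j
          rcases hQP.mem_or_mem h1 with h | h
          · exact h
          · exact absurd (hQP.1) (fun _ => hQP.1 (Ideal.eq_top_of_isUnit_mem Q h hu))
        rcases i with _ | i
        · -- constant term
          have hg : f - Polynomial.C (f.coeff 0) ∈ Ideal.map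
              (Polynomial.C : A →+* Polynomial A) Q := by
            rw [Ideal.mem_map_C_iff]
            intro j
            rcases j with _ | j
            · simp
            · simpa using hcoeffs j
          have hmap : Ideal.map (Polynomial.C : A →+* Polynomial A) Q ≤ P :=
            Ideal.map_le_iff_le_comap.mpr le_rfl
          have hC0 : Polynomial.C (f.coeff 0) ∈ P := by
            have := P.sub_mem hf (hmap hg)
            simpa using this
          exact hC0
        · exact hcoeffs i
  apply le_antisymm
  · intro f hf
    rw [Ideal.mem_map_C_iff]
    exact key f.natDegree f le_rfl hf
  · exact Ideal.map_le_iff_le_comap.mpr le_rfl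
end

section
/- If P is a prime ideal of a commutative C-algebra A and Δ is a set of derivations of A, then the Δ-core (P : Δ), the largest Δ-ideal contained in P, is a prime ideal. -/
open Polynomial

/-- `I` is a `Δ`-ideal for a set `Δ` of derivations. -/
def IsDeltaSetIdeal {A : Type*} [CommRing A] [Algebra ℂ A] (Δ : Set (Derivation ℂ A A))
    (I : Ideal A) : Prop :=
  ∀ δ ∈ Δ, ∀ a ∈ I, δ a ∈ I

lemma nat_cancel' {A : Type*} [CommRing A] [Algebra ℂ A] (Q : Ideal A) (n : ℕ)
    (z : A) (h : ((n + 1 : ℕ) : A) * z ∈ Q) : z ∈ Q := by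
  have h1 : (algebraMap ℂ A ((n + 1 : ℕ) : ℂ)⁻¹) * (((n + 1 : ℕ) : A) * z) ∈ Q :=
    Q.mul_mem_left _ h
  have h2 : (algebraMap ℂ A ((n + 1 : ℕ) : ℂ)⁻¹) * ((n + 1 : ℕ) : A) = 1 := by
    rw [← map_natCast (algebraMap ℂ A) (n + 1), ← map_mul,
      inv_mul_cancel₀ (Nat.cast_ne_zero.mpr (Nat.succ_ne_zero n)), map_one]
  rwa [← mul_assoc, h2, one_mul] at h1

lemma pow_lemma' {A : Type*} [CommRing A] [Algebra ℂ A] (δ : Derivation ℂ A A) (Q : Ideal A)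
    (hQ : IsDeltaIdeal δ Q) (x : A) :
    ∀ m k, x ^ m * (δ x) ^ k ∈ Q → (δ x) ^ (k + 2 * m) ∈ Q := by
  intro m
  induction m with
  | zero => intro k h; simpa using h
  | succ m ih =>
    intro k h
    have hd : δ (x ^ (m + 1) * (δ x) ^ k) * δ x ∈ Q := Q.mul_mem_right _ (hQ _ h)
    have h2 : δ (δ x) * (x ^ (m + 1) * (δ x) ^ k) ∈ Q := Q.mul_mem_left _ h
    have key : ((m + 1 : ℕ) : A) * (x ^ m * (δ x) ^ (k + 2)) =
        δ (x ^ (m + 1) * (δ x) ^ k) * δ x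
          - ((k : ℕ) : A) * (δ (δ x) * (x ^ (m + 1) * (δ x) ^ k)) := by
      rw [Derivation.leibniz, Derivation.leibniz_pow, Derivation.leibniz_pow]
      rcases k with _ | j
      · simp [smul_eq_mul]; ring
      · simp only [Nat.add_sub_cancel, smul_eq_mul, nsmul_eq_mul]
        push_cast
        ring
    have h3 : ((m + 1 : ℕ) : A) * (x ^ m * (δ x) ^ (k + 2)) ∈ Q := by
      rw [key]; exact Q.sub_mem hd (Q.mul_mem_left _ h2)
    have h4 : x ^ m * (δ x) ^ (k + 2) ∈ Q := nat_cancel' Q m _ (by exact_mod_cast h3)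
    have := ih (k + 2) h4
    have he : k + 2 + 2 * m = k + 2 * (m + 1) := by omega
    rwa [he] at this

lemma radical_delta {A : Type*} [CommRing A] [Algebra ℂ A] (δ : Derivation ℂ A A)
    (Q : Ideal A) (hQ : IsDeltaIdeal δ Q) : IsDeltaIdeal δ Q.radical := by
  intro x hx
  obtain ⟨n, hn⟩ := hx
  exact ⟨0 + 2 * n, pow_lemma' δ Q hQ x n 0 (by simpa using hn)⟩

lemma split_lemma {A : Type*} [CommRing A] [Algebra ℂ A] (δ : Derivation ℂ A A)
    (Q : Ideal A) (hQ : IsDeltaIdeal δ Q) (hrad : Q.radical ≤ Q)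
    (x b : A) (h : x * b ∈ Q) : δ x * b ∈ Q := by
  have h1 : δ (x * b) ∈ Q := hQ _ h
  have h2 : (x * b) * (δ b * δ x) ∈ Q := Q.mul_mem_right _ h
  have key : (δ x * b) ^ 2 = (δ x * b) * δ (x * b) - (x * b) * (δ b * δ x) := by
    rw [Derivation.leibniz]; simp only [smul_eq_mul]; ring
  have hsq : (δ x * b) ^ 2 ∈ Q := by
    rw [key]; exact Q.sub_mem (Q.mul_mem_left _ h1) h2
  exact hrad ⟨2, hsq⟩

theorem stmt_6 {A : Type*} [CommRing A] [Algebra ℂ A]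
    (Δ : Set (Derivation ℂ A A)) (P : Ideal A) (hP : P.IsPrime)
    (Q : Ideal A) (hQΔ : IsDeltaSetIdeal Δ Q) (hQP : Q ≤ P)
    (hlargest : ∀ Q' : Ideal A, IsDeltaSetIdeal Δ Q' → Q' ≤ P → Q' ≤ Q) :
    Q.IsPrime := by
  have hrad : Q.radical ≤ Q := by
    apply hlargest
    · intro δ hδ; exact radical_delta δ Q (hQΔ δ hδ)
    · calc Q.radical ≤ P.radical := Ideal.radical_mono hQP
        _ = P := hP.radical
  constructor
  · intro hQtop
    exact hP.ne_top (top_le_iff.mp (hQtop ▸ hQP))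
  · intro a b hab
    by_cases ha : a ∈ Q
    · exact Or.inl ha
    right
    set K : Ideal A := Q.colon (Ideal.span {b}) with hK
    have hmemK : ∀ x, x ∈ K ↔ x * b ∈ Q := fun x => Ideal.mem_colon_span_singleton
    have hKΔ : IsDeltaSetIdeal Δ K := by
      intro δ hδ x hx
      exact (hmemK _).mpr (split_lemma δ Q (hQΔ δ hδ) hrad x b ((hmemK _).mp hx))
    have haK : a ∈ K := (hmemK _).mpr hab
    have hKP : ¬ K ≤ P := fun h => ha (hlargest K hKΔ h haK)
    obtain ⟨c, hcK, hcP⟩ := SetLike.not_le_iff_exists.mp hKP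
    set J : Ideal A := Q.colon K with hJ
    have hmemJ : ∀ y, y ∈ J ↔ ∀ x ∈ K, y * x ∈ Q := by
      intro y
      constructor
      · intro hy x hx
        simpa [smul_eq_mul] using Submodule.mem_colon.mp hy x hx
      · intro hy
        exact Submodule.mem_colon.mpr (fun x hx => by simpa [smul_eq_mul] using hy x hx)
    have hbJ : b ∈ J := (hmemJ _).mpr (fun x hx => by
      rw [mul_comm]; exact (hmemK _).mp hx)
    have hJΔ : IsDeltaSetIdeal Δ J := by
      intro δ hδ y hy
      refine (hmemJ _).mpr (fun x hx => ?_)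
      have h1 : δ (y * x) ∈ Q := hQΔ δ hδ _ ((hmemJ _).mp hy x hx)
      have h2 : y * δ x ∈ Q := (hmemJ _).mp hy _ (hKΔ δ hδ x hx)
      have key : δ y * x = δ (y * x) - y * δ x := by
        rw [Derivation.leibniz]; simp only [smul_eq_mul]; ring
      rw [key]; exact Q.sub_mem h1 h2
    have hJP : J ≤ P := by
      intro y hy
      have : y * c ∈ P := hQP ((hmemJ _).mp hy c hcK)
      rcases hP.mem_or_mem this with h | h
      · exact h
      · exact absurd h hcP
    exact hlargest J hJΔ hJP hbJ
end

section
/- The Poisson algebra B = A[z] with bracket {−,−}_δ is Poisson simple if and only if A is δ-simple (i.e., δ is a simple derivation). -/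
open Polynomial

theorem stmt_7 {A : Type*} [CommRing A] [Algebra ℂ A] [IsDomain A]
    (δ : Derivation ℂ A A) (hδ : δ ≠ 0)
    (br : Polynomial A → Polynomial A → Polynomial A) (hbr : IsDeltaBracket δ br) :
    (∀ I : Ideal (Polynomial A), IsPoissonIdeal br I → I = ⊥ ∨ I = ⊤) ↔
      (∀ I : Ideal A, IsDeltaIdeal δ I → I = ⊥ ∨ I = ⊤) := by
  obtain ⟨hpb, hCC, hXC⟩ := hbr
  haveI : CharZero A := charZero_of_injective_algebraMap (algebraMap ℂ A).injective
  -- additivity in the right argument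
  have hadd_r : ∀ a b c : Polynomial A, br a (b + c) = br a b + br a c := by
    intro a b c
    rw [hpb.antisymm a (b + c), hpb.add_left, neg_add, ← hpb.antisymm, ← hpb.antisymm]
  -- left Leibniz
  have hleib_l : ∀ a b c : Polynomial A, br (a * b) c = br a c * b + a * br b c := by
    intro a b c
    calc br (a * b) c = -br c (a * b) := hpb.antisymm _ _
      _ = -(br c a * b + a * br c b) := by rw [hpb.leibniz]
      _ = (-br c a) * b + a * (-br c b) := by ring
      _ = br a c * b + a * br b c := by rw [← hpb.antisymm, ← hpb.antisymm]
  have h1r : ∀ f : Polynomial A, br f 1 = 0 := by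
    intro f
    have h := hpb.leibniz f 1 1
    rw [mul_one, mul_one, one_mul] at h
    exact add_eq_right.mp h.symm
  have h1l : ∀ f : Polynomial A, br 1 f = 0 := by
    intro f; rw [hpb.antisymm, h1r, neg_zero]
  -- br X X = 0
  have hXX : br X (X : Polynomial A) = 0 := by
    have h : (2 : ℂ) • br X (X : Polynomial A) = 0 := by
      rw [two_smul]
      nth_rewrite 2 [hpb.antisymm X X]
      simp
    have h2 := congrArg (fun y => ((2 : ℂ))⁻¹ • y) h
    simpa [smul_smul] using h2
  -- br X (X^i) = 0
  have hXpow : ∀ i : ℕ, br X ((X : Polynomial A) ^ i) = 0 := by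
    intro i
    induction i with
    | zero => simpa using h1r X
    | succ k ih =>
      rw [pow_succ, hpb.leibniz, ih, hXX, zero_mul, mul_zero, add_zero]
  -- key lemma 1 : br X acts as δ on coefficients
  have key1 : ∀ f : Polynomial A, ∀ i : ℕ, (br X f).coeff i = δ (f.coeff i) := by
    intro f
    induction f using Polynomial.induction_on' with
    | add p q hp hq =>
      intro i
      rw [hadd_r, coeff_add, coeff_add, hp, hq, map_add]
    | monomial k a =>
      intro i
      have h : br X ((monomial k) a) = C (δ a) * X ^ k := by
        rw [← C_mul_X_pow_eq_monomial, hpb.leibniz, hXC, hXpow, mul_zero, add_zero]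
      rw [h, ← C_mul_X_pow_eq_monomial, coeff_C_mul, coeff_C_mul, coeff_X_pow]
      by_cases hik : i = k <;> simp [hik]
  -- br (C b) (X^i) = -(C (δ b) * derivative (X^i))
  have hCXpow : ∀ b : A, ∀ i : ℕ,
      br (C b) ((X : Polynomial A) ^ i) = -(C (δ b) * derivative ((X : Polynomial A) ^ i)) := by
    intro b i
    induction i with
    | zero => simpa using h1r (C b)
    | succ k ih =>
      have hCX : br (C b) (X : Polynomial A) = -C (δ b) := by
        rw [hpb.antisymm, hXC]
      rw [pow_succ, hpb.leibniz, ih, hCX, derivative_mul, derivative_X]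
      ring
  -- key lemma 2 : br (C b) f = -(C (δ b) * derivative f)
  have key2 : ∀ b : A, ∀ f : Polynomial A,
      br (C b) f = -(C (δ b) * derivative f) := by
    intro b f
    induction f using Polynomial.induction_on' with
    | add p q hp hq => rw [hadd_r, hp, hq, derivative_add]; ring
    | monomial k a =>
      rw [← C_mul_X_pow_eq_monomial, hpb.leibniz, hCC, hCXpow, derivative_C_mul]
      ring
  constructor
  · -- Poisson simple → δ-simple
    intro hB J hJ
    by_cases hJ0 : J = ⊥
    · exact Or.inl hJ0
    right
    set I : Ideal (Polynomial A) := Ideal.map (C : A →+* Polynomial A) J with hI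
    -- br f (C c) ∈ I for c ∈ J
    have hbrC : ∀ f : Polynomial A, ∀ c ∈ J, br f (C c) ∈ I := by
      intro f
      induction f using Polynomial.induction_on' with
      | add p q hp hq =>
        intro c hc
        rw [hpb.add_left]
        exact I.add_mem (hp c hc) (hq c hc)
      | monomial k a =>
        intro c hc
        have hXk : ∀ k : ℕ, br ((X : Polynomial A) ^ k) (C c) ∈ I := by
          intro k
          induction k with
          | zero => rw [pow_zero, h1l]; exact I.zero_mem
          | succ m ih =>
            rw [pow_succ, hleib_l]
            refine I.add_mem (I.mul_mem_right _ ih) (I.mul_mem_left _ ?_)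
            rw [hXC]
            exact Ideal.mem_map_of_mem _ (hJ c hc)
        rw [← C_mul_X_pow_eq_monomial, hleib_l, hCC, zero_mul, zero_add]
        exact I.mul_mem_left _ (hXk k)
    have hPI : IsPoissonIdeal br I := by
      intro f p hp
      have hcoeff : ∀ n, p.coeff n ∈ J := Ideal.mem_map_C_iff.mp hp
      let brH : Polynomial A →+ Polynomial A := AddMonoidHom.mk' (br f) (hadd_r f)
      have hre : br f p = ∑ k ∈ p.support, br f ((monomial k) (p.coeff k)) := by
        conv_lhs => rw [← sum_monomial_eq p]
        rw [Polynomial.sum]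
        exact map_sum brH _ _
      rw [hre]
      refine Submodule.sum_mem I fun k _ => ?_
      rw [← C_mul_X_pow_eq_monomial, hpb.leibniz]
      exact I.add_mem (I.mul_mem_right _ (hbrC f _ (hcoeff k)))
        (I.mul_mem_right _ (Ideal.mem_map_of_mem _ (hcoeff k)))
    rcases hB I hPI with h | h
    · exfalso
      obtain ⟨j, hjJ, hjne⟩ := Submodule.exists_mem_ne_zero_of_ne_bot hJ0
      have : (C j : Polynomial A) ∈ I := Ideal.mem_map_of_mem _ hjJ
      rw [h, Ideal.mem_bot] at this
      exact hjne (by simpa using this)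
    · rw [Ideal.eq_top_iff_one] at h ⊢
      have := Ideal.mem_map_C_iff.mp h 0
      simpa using this
  · -- δ-simple → Poisson simple
    intro hA I hI
    by_cases hI0 : I = ⊥
    · exact Or.inl hI0
    right
    obtain ⟨p0, hp0I, hp0ne⟩ := Submodule.exists_mem_ne_zero_of_ne_bot hI0
    set S : Set ℕ := {k | ∃ p ∈ I, p ≠ 0 ∧ p.natDegree = k} with hS
    have hSne : S.Nonempty := ⟨p0.natDegree, p0, hp0I, hp0ne, rfl⟩
    set n := sInf S with hn
    have hmin : ∀ p ∈ I, p ≠ 0 → n ≤ p.natDegree := fun p hp hne =>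
      Nat.sInf_le ⟨p, hp, hne, rfl⟩
    -- the ideal of n-th coefficients of elements of I of degree ≤ n
    set J : Ideal A :=
      { carrier := {a | ∃ p ∈ I, p.natDegree ≤ n ∧ p.coeff n = a}
        add_mem' := by
          rintro a b ⟨p, hpI, hpd, hpc⟩ ⟨q, hqI, hqd, hqc⟩
          exact ⟨p + q, I.add_mem hpI hqI,
            le_trans (natDegree_add_le p q) (max_le hpd hqd),
            by rw [coeff_add, hpc, hqc]⟩
        zero_mem' := ⟨0, I.zero_mem, by simp, by simp⟩
        smul_mem' := by
          rintro c a ⟨p, hpI, hpd, hpc⟩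
          exact ⟨C c * p, I.mul_mem_left _ hpI,
            le_trans (natDegree_C_mul_le c p) hpd,
            by rw [coeff_C_mul, hpc]; rfl⟩ } with hJ
    have hJδ : IsDeltaIdeal δ J := by
      rintro a ⟨p, hpI, hpd, hpc⟩
      refine ⟨br X p, hI X p hpI, ?_, by rw [key1, hpc]⟩
      rw [natDegree_le_iff_coeff_eq_zero]
      intro m hm
      rw [key1]
      have : p.coeff m = 0 := natDegree_le_iff_coeff_eq_zero.mp hpd m hm
      rw [this, map_zero]
    have hJne : J ≠ ⊥ := by
      obtain ⟨p, hpI, hpne, hpd⟩ := Nat.sInf_mem hSne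
      intro hbot
      have hmem : p.coeff n ∈ J := ⟨p, hpI, le_of_eq hpd, rfl⟩
      rw [hbot, Ideal.mem_bot] at hmem
      exact hpne (leadingCoeff_eq_zero.mp (by rwa [leadingCoeff, hpd]))
    rcases hA J hJδ with h | h
    · exact absurd h hJne
    -- 1 ∈ J
    have h1 : (1 : A) ∈ J := by rw [h]; trivial
    obtain ⟨f, hfI, hfd, hfc⟩ := h1
    have hfdeg : f.natDegree = n :=
      le_antisymm hfd (le_natDegree_of_ne_zero (by rw [hfc]; exact one_ne_zero))
    rcases Nat.eq_zero_or_pos n with hn0 | hnpos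
    · -- f = 1
      have : f = 1 := by
        have hf0 : f = C (f.coeff 0) := eq_C_of_natDegree_le_zero (hn0 ▸ hfd)
        have hc1 : f.coeff 0 = 1 := hn0 ▸ hfc
        rw [hf0, hc1, map_one]
      rw [Ideal.eq_top_iff_one]
      exact this ▸ hfI
    · exfalso
      -- pick b with δ b ≠ 0
      have hb : ∃ b : A, δ b ≠ 0 := by
        by_contra hc
        push_neg at hc
        exact hδ (by ext x; simpa using hc x)
      obtain ⟨b, hbne⟩ := hb
      have hg : br (C b) f ∈ I := hI (C b) f hfI
      rw [key2] at hg
      have hdne : derivative f ≠ 0 := by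
        intro hd0
        obtain ⟨m, hm⟩ : ∃ m, n = m + 1 := ⟨n - 1, (Nat.succ_pred_eq_of_pos hnpos).symm⟩
        have := coeff_derivative f m
        rw [hd0, coeff_zero, ← hm, hfc, one_mul] at this
        have hcast : ((m : A) + 1) = ((m + 1 : ℕ) : A) := by push_cast; ring
        rw [hcast] at this
        exact (Nat.cast_ne_zero.mpr (Nat.succ_ne_zero m)) this.symm
      have hgne : -(C (δ b) * derivative f) ≠ 0 := by
        simp only [neg_ne_zero]
        exact mul_ne_zero (fun hc => hbne (C_eq_zero.mp hc)) hdne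
      have hdlt : (derivative f).natDegree < n := by
        have := natDegree_derivative_lt (p := f) (by rw [hfdeg]; exact hnpos.ne')
        rwa [hfdeg] at this
      have hgd : (-(C (δ b) * derivative f)).natDegree < n := by
        rw [natDegree_neg]
        exact lt_of_le_of_lt (natDegree_C_mul_le _ _) hdlt
      exact absurd (hmin _ hg hgne) (not_le.mpr hgd)
end

section
/- The Ore extension R = A[z; δ] is a simple ring if and only if A is δ-simple. -/
open Polynomial

section Aux
variable {A R : Type*} [CommRing A] [Algebra ℂ A] [Ring R]
  (δ : Derivation ℂ A A) (ι : A →+* R) (z : R)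

/-- coefficientwise application of δ -/
noncomputable def Dmap (p : A[X]) : A[X] := p.sum fun n a => monomial n (δ a)

lemma Dmap_coeff (p : A[X]) (m : ℕ) : (Dmap δ p).coeff m = δ (p.coeff m) := by
  rw [Dmap, Polynomial.sum_def, finset_sum_coeff]
  simp only [coeff_monomial]
  rw [Finset.sum_ite_eq' p.support m (fun n => δ (p.coeff n))]
  by_cases h : m ∈ p.support
  · simp [h]
  · simp [h, notMem_support_iff.1 h]

lemma Dmap_natDegree_le (p : A[X]) : (Dmap δ p).natDegree ≤ p.natDegree := by
  rw [natDegree_le_iff_coeff_eq_zero]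
  intro N hN
  rw [Dmap_coeff, coeff_eq_zero_of_natDegree_lt hN, map_zero]

lemma Dmap_add (p q : A[X]) : Dmap δ (p + q) = Dmap δ p + Dmap δ q := by
  ext m
  simp [Dmap_coeff]

lemma Dmap_monomial (n : ℕ) (a : A) : Dmap δ (monomial n a) = monomial n (δ a) := by
  ext m
  rw [Dmap_coeff]
  simp only [coeff_monomial]
  split <;> simp

end Aux



/-- `R` is an Ore extension `A[z;δ]`: `z·a − a·z = δ a` and every element of `R` is
uniquely a polynomial in `z` with coefficients in (the image of) `A`. -/
structure IsOreExtension {A R : Type*} [CommRing A] [Algebra ℂ A] [Ring R]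
    (δ : Derivation ℂ A A) (ι : A →+* R) (z : R) : Prop where
  comm : ∀ a : A, z * ι a - ι a * z = ι (δ a)
  repr : ∀ r : R, ∃! p : Polynomial A, r = p.sum fun n a => ι a * z ^ n


section Ore
variable {A R : Type*} [CommRing A] [Algebra ℂ A] [Ring R]
  {δ : Derivation ℂ A A} {ι : A →+* R} {z : R}

lemma ore_repr (hR : IsOreExtension δ ι z) (r : R) : ∃! p : A[X], r = eval₂ ι z p := by
  simpa only [eval₂_eq_sum] using hR.repr r

lemma ore_inj (hR : IsOreExtension δ ι z) {p q : A[X]}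
    (h : eval₂ ι z p = eval₂ ι z q) : p = q := by
  obtain ⟨p₀, _, hu⟩ := ore_repr hR (eval₂ ι z p)
  exact (hu p rfl).trans (hu q h).symm

lemma ore_surj (hR : IsOreExtension δ ι z) (r : R) : ∃ p : A[X], eval₂ ι z p = r := by
  obtain ⟨p, hp, _⟩ := ore_repr hR r
  exact ⟨p, hp.symm⟩

lemma ore_C_mul (a : A) (p : A[X]) :
    ι a * eval₂ ι z p = eval₂ ι z (C a * p) := by
  induction p using Polynomial.induction_on' with
  | add p q hp hq => rw [eval₂_add, mul_add, hp, hq, mul_add, eval₂_add]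
  | monomial n b =>
      rw [eval₂_monomial, C_mul_monomial, eval₂_monomial, map_mul, mul_assoc]

lemma ore_z_mul (hR : IsOreExtension δ ι z) (p : A[X]) :
    z * eval₂ ι z p = eval₂ ι z (X * p + Dmap δ p) := by
  induction p using Polynomial.induction_on' with
  | add p q hp hq =>
      rw [eval₂_add, mul_add, hp, hq, ← eval₂_add]
      congr 1
      rw [Dmap_add, mul_add]
      ring
  | monomial n a =>
      have hc : z * ι a = ι a * z + ι (δ a) := by
        have := hR.comm a
        rw [sub_eq_iff_eq_add] at this
        rw [this, add_comm]
      rw [eval₂_monomial, Dmap_monomial, X_mul, monomial_mul_X, eval₂_add,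
        eval₂_monomial, eval₂_monomial, ← mul_assoc, hc, add_mul, mul_assoc,
        ← pow_succ']

lemma ore_pow_mul (hR : IsOreExtension δ ι z) (k : ℕ) (a : A) :
    ∃ q : A[X], z ^ k * ι a = eval₂ ι z q ∧ q.natDegree ≤ k ∧ q.coeff k = a ∧
      (k ≠ 0 → q.coeff (k - 1) = k • δ a) := by
  induction k with
  | zero =>
      exact ⟨C a, by rw [pow_zero, one_mul, eval₂_C], by simp, by simp [coeff_C],
        fun h => absurd rfl h⟩
  | succ k ih =>
      obtain ⟨q, hq1, hq2, hq3, hq4⟩ := ih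
      refine ⟨X * q + Dmap δ q, ?_, ?_, ?_, ?_⟩
      · rw [pow_succ', mul_assoc, hq1, ore_z_mul hR]
      · refine natDegree_add_le_of_degree_le ?_ ?_
        · refine (natDegree_mul_le).trans ?_
          have hX : (X : A[X]).natDegree ≤ 1 := natDegree_X_le
          omega
        · exact (Dmap_natDegree_le δ q).trans (hq2.trans (Nat.le_succ k))
      · rw [coeff_add, Dmap_coeff, coeff_X_mul, hq3,
          coeff_eq_zero_of_natDegree_lt (lt_of_le_of_lt hq2 (Nat.lt_succ_self k)),
          map_zero, add_zero]
      · intro _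
        simp only [Nat.add_sub_cancel, coeff_add, Dmap_coeff]
        rcases Nat.eq_zero_or_pos k with hk | hk
        · subst hk
          simp [hq3]
        · have hk' : k ≠ 0 := Nat.pos_iff_ne_zero.mp hk
          obtain ⟨m, rfl⟩ := Nat.exists_eq_succ_of_ne_zero hk'
          have := hq4 hk'
          simp only [Nat.succ_sub_one] at this
          rw [coeff_X_mul, hq3, this]
          exact (succ_nsmul (δ a) (m+1)).symm

end Ore
section Ore2
variable {A R : Type*} [CommRing A] [Algebra ℂ A] [Ring R]
  {δ : Derivation ℂ A A} {ι : A →+* R} {z : R}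

lemma ore_mul_right (hR : IsOreExtension δ ι z) (p : A[X]) (a : A) :
    ∃ E : A[X], eval₂ ι z p * ι a = eval₂ ι z E ∧ E.natDegree ≤ p.natDegree ∧
      E.coeff p.natDegree = p.coeff p.natDegree * a ∧
      (p.natDegree ≠ 0 → E.coeff (p.natDegree - 1) =
        p.coeff (p.natDegree - 1) * a + p.natDegree • (p.coeff p.natDegree * δ a)) := by
  classical
  choose q hq1 hq2 hq3 hq4 using fun k => ore_pow_mul hR k a
  set n := p.natDegree with hn
  refine ⟨∑ k ∈ Finset.range (n + 1), C (p.coeff k) * q k, ?_, ?_, ?_, ?_⟩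
  · rw [eval₂_finset_sum, eval₂_eq_sum_range, Finset.sum_mul]
    refine Finset.sum_congr rfl fun k _ => ?_
    rw [← ore_C_mul, ← hq1, ← mul_assoc]
  · refine natDegree_sum_le_of_forall_le _ _ fun k hk => ?_
    exact (natDegree_C_mul_le _ _).trans ((hq2 k).trans (Nat.lt_succ_iff.1
      (Finset.mem_range.1 hk)))
  · rw [finset_sum_coeff]
    rw [Finset.sum_eq_single_of_mem n (Finset.self_mem_range_succ n)]
    · rw [coeff_C_mul, hq3]
    · intro k hk hkn
      have hklt : k < n := lt_of_le_of_ne (Nat.lt_succ_iff.1 (Finset.mem_range.1 hk)) hkn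
      rw [coeff_C_mul, coeff_eq_zero_of_natDegree_lt (lt_of_le_of_lt (hq2 k) hklt), mul_zero]
  · intro hn0
    obtain ⟨m, hm⟩ := Nat.exists_eq_succ_of_ne_zero hn0
    rw [finset_sum_coeff, hm]
    rw [Finset.sum_range_succ, Finset.sum_range_succ]
    have hz : ∀ k ∈ Finset.range m, (C (p.coeff k) * q k).coeff (m + 1 - 1) = 0 := by
      intro k hk
      rw [coeff_C_mul, Nat.add_sub_cancel,
        coeff_eq_zero_of_natDegree_lt (lt_of_le_of_lt (hq2 k) (Finset.mem_range.1 hk)),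
        mul_zero]
    rw [Finset.sum_eq_zero hz, zero_add]
    simp only [Nat.succ_sub_one]
    rw [coeff_C_mul, hq3, coeff_C_mul]
    have h4 := hq4 (m + 1) (Nat.succ_ne_zero m)
    rw [Nat.add_sub_cancel] at h4
    rw [h4, mul_smul_comm]

end Ore2

theorem stmt_8 {A R : Type*} [CommRing A] [Algebra ℂ A] [IsDomain A] [Ring R]
    (δ : Derivation ℂ A A) (hδ : δ ≠ 0) (ι : A →+* R) (z : R)
    (hR : IsOreExtension δ ι z) :
    IsSimpleRing R ↔ (∀ I : Ideal A, IsDeltaIdeal δ I → I = ⊥ ∨ I = ⊤) := by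
  classical
  constructor
  · -- forward: R simple → A is δ-simple
    intro hs I hI
    set S : Set R := {r | ∃ p : A[X], (∀ m, p.coeff m ∈ I) ∧ eval₂ ι z p = r} with hSdef
    have hS0 : (0 : R) ∈ S := ⟨0, fun m => by simpa using I.zero_mem, eval₂_zero _ _⟩
    have hSadd : ∀ {x y : R}, x ∈ S → y ∈ S → x + y ∈ S := by
      rintro x y ⟨p, hp, rfl⟩ ⟨q, hq, rfl⟩
      exact ⟨p + q, fun m => by rw [coeff_add]; exact I.add_mem (hp m) (hq m),
        eval₂_add _ _⟩
    have hSneg : ∀ {x : R}, x ∈ S → -x ∈ S := by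
      rintro x ⟨p, hp, rfl⟩
      exact ⟨-p, fun m => by rw [coeff_neg]; exact I.neg_mem (hp m), eval₂_neg _⟩
    have hSC : ∀ (a : A) {y : R}, y ∈ S → ι a * y ∈ S := by
      rintro a y ⟨p, hp, rfl⟩
      exact ⟨C a * p, fun m => by rw [coeff_C_mul]; exact I.mul_mem_left a (hp m),
        (ore_C_mul a p).symm⟩
    have hSz : ∀ {y : R}, y ∈ S → z * y ∈ S := by
      rintro y ⟨p, hp, rfl⟩
      refine ⟨X * p + Dmap δ p, fun m => ?_, (ore_z_mul hR p).symm⟩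
      rw [coeff_add, Dmap_coeff]
      refine I.add_mem ?_ (hI _ (hp m))
      cases m with
      | zero => simpa [mul_coeff_zero] using I.zero_mem
      | succ m => rw [coeff_X_mul]; exact hp m
    have hSzpow : ∀ (k : ℕ) {y : R}, y ∈ S → z ^ k * y ∈ S := by
      intro k
      induction k with
      | zero => intro y hy; simpa using hy
      | succ k ih =>
          intro y hy
          rw [pow_succ', mul_assoc]
          exact hSz (ih hy)
    have hml : ∀ {x y : R}, y ∈ S → x * y ∈ S := by
      intro x y hy
      obtain ⟨qx, hqx⟩ := ore_surj hR x
      rw [← hqx, eval₂_eq_sum_range, Finset.sum_mul]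
      refine Finset.sum_induction _ (· ∈ S) (fun a b ha hb => hSadd ha hb) hS0 ?_
      intro k _
      rw [mul_assoc]
      exact hSC _ (hSzpow k hy)
    have hmr : ∀ {x y : R}, x ∈ S → x * y ∈ S := by
      rintro x y ⟨p, hp, rfl⟩
      rw [eval₂_eq_sum_range, Finset.sum_mul]
      refine Finset.sum_induction _ (· ∈ S) (fun a b ha hb => hSadd ha hb) hS0 ?_
      intro k _
      obtain ⟨g, hg⟩ := ore_surj hR (z ^ k * y)
      rw [mul_assoc, ← hg, ore_C_mul]
      exact ⟨C (p.coeff k) * g,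
        fun m => by rw [coeff_C_mul]; exact I.mul_mem_right _ (hp k), rfl⟩
    let J : TwoSidedIdeal R := TwoSidedIdeal.mk' S hS0 hSadd hSneg hml hmr
    have hmem : ∀ x : R, x ∈ J ↔ x ∈ S := fun x =>
      TwoSidedIdeal.mem_mk' S hS0 @hSadd @hSneg @hml @hmr x
    rcases hs.simple.eq_bot_or_eq_top J with h | h
    · left
      rw [eq_bot_iff]
      intro a ha
      have h1 : ι a ∈ J := (hmem _).2 ⟨C a, fun m => by
        rcases Nat.eq_zero_or_pos m with rfl | hm
        · simpa using ha
        · rw [coeff_C, if_neg (Nat.pos_iff_ne_zero.1 hm)]; exact I.zero_mem,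
        eval₂_C _ _⟩
      rw [h] at h1
      have h0 : ι a = 0 := (TwoSidedIdeal.mem_bot R).1 h1
      have : (C a : A[X]) = 0 := ore_inj hR (by rw [eval₂_C, eval₂_zero, h0])
      simpa using C_eq_zero.1 this
    · right
      rw [Ideal.eq_top_iff_one]
      have h1 : (1 : R) ∈ J := by rw [h]; trivial
      obtain ⟨p, hp, hp1⟩ := (hmem _).1 h1
      have hpone : p = 1 := ore_inj hR (by rw [hp1, eval₂_one])
      have hc := hp 0
      rwa [hpone, coeff_one_zero] at hc
  · -- backward: A δ-simple → R simple
    intro hsimp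
    haveI : CharZero A := charZero_of_injective_algebraMap (algebraMap ℂ A).injective
    have h10 : (1 : R) ≠ 0 := by
      intro h
      have : (1 : A[X]) = 0 := ore_inj hR (by rw [eval₂_one, eval₂_zero]; exact h)
      exact one_ne_zero this
    haveI : Nontrivial R := nontrivial_of_ne 1 0 h10
    refine IsSimpleRing.of_eq_bot_or_eq_top fun J => ?_
    by_cases hJ : J = ⊥
    · exact Or.inl hJ
    right
    have hex : ∃ m, ∃ p : A[X], eval₂ ι z p ∈ J ∧ p ≠ 0 ∧ p.natDegree = m := by
      have hx : ∃ x ∈ J, x ≠ 0 := by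
        by_contra h
        push_neg at h
        exact hJ (eq_bot_iff.2 fun x hx => (TwoSidedIdeal.mem_bot R).2 (h x hx))
      obtain ⟨x, hx, hx0⟩ := hx
      obtain ⟨p, hp⟩ := ore_surj hR x
      exact ⟨p.natDegree, p, hp ▸ hx,
        fun h0 => hx0 (by rw [← hp, h0, eval₂_zero]), rfl⟩
    set n := Nat.find hex with hndef
    obtain ⟨pmin, hpminJ, hpmin0, hpminn⟩ := Nat.find_spec hex
    have hmin : ∀ q : A[X], eval₂ ι z q ∈ J → q ≠ 0 → n ≤ q.natDegree :=
      fun q h1 h2 => Nat.find_min' hex ⟨q, h1, h2, rfl⟩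
    have hPC : ∀ (a : A) (p : A[X]), eval₂ ι z p ∈ J → eval₂ ι z (C a * p) ∈ J :=
      fun a p h => by rw [← ore_C_mul]; exact J.mul_mem_left _ _ h
    have hPD : ∀ p : A[X], eval₂ ι z p ∈ J → eval₂ ι z (Dmap δ p) ∈ J := by
      intro p h
      have h1 : eval₂ ι z (X * p + Dmap δ p) ∈ J := by
        rw [← ore_z_mul hR]; exact J.mul_mem_left _ _ h
      have h2 : eval₂ ι z (X * p) ∈ J := by
        rw [X_mul, eval₂_mul_X]; exact J.mul_mem_right _ _ h
      have h3 := J.sub_mem h1 h2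
      rw [eval₂_add] at h3
      simpa using h3
    let I : Ideal A :=
      { carrier := {a | ∃ p : A[X], eval₂ ι z p ∈ J ∧ p.natDegree ≤ n ∧ p.coeff n = a}
        add_mem' := by
          rintro a b ⟨p, hp1, hp2, hp3⟩ ⟨q, hq1, hq2, hq3⟩
          exact ⟨p + q, by rw [eval₂_add]; exact J.add_mem hp1 hq1,
            (natDegree_add_le p q).trans (max_le hp2 hq2),
            by rw [coeff_add, hp3, hq3]⟩
        zero_mem' := ⟨0, by simpa using J.zero_mem, by simp, by simp⟩
        smul_mem' := by
          rintro c a ⟨p, hp1, hp2, hp3⟩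
          exact ⟨C c * p, hPC c p hp1, (natDegree_C_mul_le c p).trans hp2,
            by rw [coeff_C_mul, hp3, smul_eq_mul]⟩ }
    have hIδ : IsDeltaIdeal δ I := by
      rintro a ⟨p, hp1, hp2, hp3⟩
      exact ⟨Dmap δ p, hPD p hp1, (Dmap_natDegree_le δ p).trans hp2,
        by rw [Dmap_coeff, hp3]⟩
    rcases hsimp I hIδ with hI | hI
    · exfalso
      have hmem : pmin.coeff n ∈ I := ⟨pmin, hpminJ, hpminn.le, rfl⟩
      rw [hI] at hmem
      have h0 : pmin.coeff n = 0 := Ideal.mem_bot.1 hmem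
      exact hpmin0 (leadingCoeff_eq_zero.1 (by rw [leadingCoeff, hpminn, h0]))
    have h1I : (1 : A) ∈ I := (Ideal.eq_top_iff_one I).1 hI
    obtain ⟨p1, hp1J, hp1deg, hp1c⟩ := h1I
    rcases Nat.eq_zero_or_pos n with hn0 | hnpos
    · have hd : p1.natDegree = 0 := le_antisymm (hn0 ▸ hp1deg) (Nat.zero_le _)
      have hp1 : p1 = 1 := by
        rw [eq_C_of_natDegree_eq_zero hd, ← hn0, hp1c, map_one]
      rw [hp1, eval₂_one] at hp1J
      exact (TwoSidedIdeal.one_mem_iff J).1 hp1J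
    · exfalso
      have hn1 : n ≠ 0 := Nat.pos_iff_ne_zero.1 hnpos
      obtain ⟨a, ha⟩ := DFunLike.ne_iff.1 hδ
      have hδa : δ a ≠ 0 := by simpa using ha
      have hp1n : p1.natDegree = n :=
        le_antisymm hp1deg (le_natDegree_of_ne_zero (by rw [hp1c]; exact one_ne_zero))
      obtain ⟨E, hE1, hE2, hE3, hE4⟩ := ore_mul_right hR p1 a
      rw [hp1n] at hE2 hE3 hE4
      set F : A[X] := E - C a * p1 with hFdef
      have hFJ : eval₂ ι z F ∈ J := by
        have hF : eval₂ ι z F = eval₂ ι z p1 * ι a - ι a * eval₂ ι z p1 := by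
          rw [hFdef, eval₂_sub, ← hE1, ore_C_mul]
        rw [hF]
        exact J.sub_mem (J.mul_mem_right _ _ hp1J) (J.mul_mem_left _ _ hp1J)
      have hFdeg : F.natDegree ≤ n :=
        (natDegree_sub_le E _).trans (max_le hE2 ((natDegree_C_mul_le a p1).trans hp1deg))
      have hFn : F.coeff n = 0 := by
        rw [hFdef, coeff_sub, coeff_C_mul, hE3, hp1c, one_mul, mul_one, sub_self]
      have hF0 : F = 0 := by
        by_contra h
        have hge := hmin F hFJ h
        have heq : F.natDegree = n := le_antisymm hFdeg hge
        exact h (leadingCoeff_eq_zero.1 (by rw [leadingCoeff, heq, hFn]))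
      have h4 := hE4 hn1
      have hzero : F.coeff (n - 1) = 0 := by rw [hF0]; simp
      rw [hFdef, coeff_sub, coeff_C_mul, h4, hp1c, one_mul] at hzero
      have hcast : (n : A) * δ a = 0 := by
        rw [nsmul_eq_mul] at hzero
        linear_combination hzero
      rcases mul_eq_zero.1 hcast with h | h
      · exact hn1 (Nat.cast_eq_zero.1 h)
      · exact hδa h
end

section
/- The ideal JB generated by J = δ(A)A in B = A[z] equals the ideal of B generated by all brackets {b, b'} with b, b' ∈ B, and JB is contained in every residually null Poisson ideal of B. -/
open Polynomial

theorem stmt_9 {A : Type*} [CommRing A] [Algebra ℂ A] [IsDomain A]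
    (δ : Derivation ℂ A A) (hδ : δ ≠ 0)
    (br : Polynomial A → Polynomial A → Polynomial A) (hbr : IsDeltaBracket δ br) :
    (Ideal.span (Set.range (⇑δ))).map (Polynomial.C : A →+* Polynomial A) =
        Ideal.span {x : Polynomial A | ∃ p q : Polynomial A, br p q = x} ∧
      ∀ I : Ideal (Polynomial A), IsPoissonIdeal br I →
        (∀ p q : Polynomial A, br p q ∈ I) →
        (Ideal.span (Set.range (⇑δ))).map (Polynomial.C : A →+* Polynomial A) ≤ I := by
  obtain ⟨hpb, hCC, hXC⟩ := hbr
  set JB : Ideal (Polynomial A) :=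
    (Ideal.span (Set.range (⇑δ))).map (Polynomial.C : A →+* Polynomial A) with hJB
  -- basic algebraic facts
  have hadd_r : ∀ p q r : Polynomial A, br p (q + r) = br p q + br p r := by
    intro p q r
    rw [hpb.antisymm p (q + r), hpb.add_left, neg_add, hpb.antisymm p q, hpb.antisymm p r]
  have hCX : ∀ a : A, br (Polynomial.C a) Polynomial.X = - Polynomial.C (δ a) := by
    intro a; rw [hpb.antisymm, hXC]
  have hleib_l : ∀ u v w : Polynomial A, br (u * v) w = br u w * v + u * br v w := by
    intro u v w
    rw [hpb.antisymm (u * v) w, hpb.leibniz, neg_add, hpb.antisymm u w, hpb.antisymm v w]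
    ring
  have hXX : br Polynomial.X Polynomial.X = 0 := by
    have h := hpb.antisymm Polynomial.X Polynomial.X
    rw [eq_neg_iff_add_eq_zero] at h
    calc br Polynomial.X Polynomial.X
        = (2⁻¹ : ℂ) • ((2 : ℂ) • br Polynomial.X Polynomial.X) := by
          rw [smul_smul]; norm_num
      _ = (2⁻¹ : ℂ) • (br Polynomial.X Polynomial.X + br Polynomial.X Polynomial.X) := by
          rw [two_smul]
      _ = 0 := by rw [h, smul_zero]
  -- membership of basic brackets
  have hδmem : ∀ a : A, Polynomial.C (δ a) ∈ JB := fun a =>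
    Ideal.mem_map_of_mem _ (Ideal.subset_span ⟨a, rfl⟩)
  have hXq : ∀ q : Polynomial A, br Polynomial.X q ∈ JB := by
    intro q
    induction q using Polynomial.induction_on with
    | C a => rw [hXC]; exact hδmem a
    | add p q hp hq => rw [hadd_r]; exact add_mem hp hq
    | monomial n a hn =>
        rw [pow_succ, ← mul_assoc, hpb.leibniz, hXX, mul_zero, add_zero]
        exact Ideal.mul_mem_right _ _ hn
  have hCq : ∀ (a : A) (q : Polynomial A), br (Polynomial.C a) q ∈ JB := by
    intro a q
    induction q using Polynomial.induction_on with
    | C b => rw [hCC]; exact zero_mem _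
    | add p q hp hq => rw [hadd_r]; exact add_mem hp hq
    | monomial n b hn =>
        rw [pow_succ, ← mul_assoc, hpb.leibniz, hCX]
        exact add_mem (Ideal.mul_mem_right _ _ hn)
          (Ideal.mul_mem_left _ _ (neg_mem (hδmem a)))
  have hmem : ∀ p q : Polynomial A, br p q ∈ JB := by
    intro p q
    induction p using Polynomial.induction_on with
    | C a => exact hCq a q
    | add p r hp hr => rw [hpb.add_left]; exact add_mem hp hr
    | monomial n a hn =>
        rw [pow_succ, ← mul_assoc, hleib_l]
        exact add_mem (Ideal.mul_mem_right _ _ hn)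
          (Ideal.mul_mem_left _ _ (hXq q))
  have hmain : JB = Ideal.span {x : Polynomial A | ∃ p q : Polynomial A, br p q = x} := by
    apply le_antisymm
    · rw [hJB, Ideal.map_span]
      apply Ideal.span_le.mpr
      rintro x ⟨y, ⟨a, rfl⟩, rfl⟩
      exact Ideal.subset_span ⟨Polynomial.X, Polynomial.C a, hXC a⟩
    · apply Ideal.span_le.mpr
      rintro x ⟨p, q, rfl⟩
      exact hmem p q
  refine ⟨hmain, fun I _ hI => ?_⟩
  rw [hmain]
  apply Ideal.span_le.mpr
  rintro x ⟨p, q, rfl⟩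
  exact hI p q
end

section
/- If J = δ(A)A then JR is a two-sided ideal of R = A[z;δ], the quotient R/JR is commutative, and JR is contained in every ideal I of R such that R/I is commutative. -/
open Polynomial

theorem stmt_10 {A R : Type*} [CommRing A] [Algebra ℂ A] [IsDomain A] [Ring R]
    (δ : Derivation ℂ A A) (hδ : δ ≠ 0) (ι : A →+* R) (z : R)
    (hR : IsOreExtension δ ι z)
    (J : Ideal A) (hJ : J = Ideal.span (Set.range (⇑δ)))
    (K : TwoSidedIdeal R) (hK : K = TwoSidedIdeal.span (ι '' (J : Set A))) :
    (K : Set R) = (AddSubgroup.closure {y : R | ∃ j ∈ J, ∃ r : R, y = ι j * r} : Set R) ∧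
      (∀ x y : R, x * y - y * x ∈ K) ∧
      (∀ I : TwoSidedIdeal R, (∀ x y : R, x * y - y * x ∈ I) → K ≤ I) := by
  obtain ⟨hcomm, hrepr⟩ := hR
  have hδJ : ∀ b : A, δ b ∈ J := fun b => hJ ▸ Ideal.subset_span ⟨b, rfl⟩
  have hJδ : ∀ a ∈ J, δ a ∈ J := by
    intro a ha
    rw [hJ] at ha
    induction ha using Submodule.span_induction with
    | mem x hx => obtain ⟨b, rfl⟩ := hx; exact hδJ (δ b)
    | zero => simpa using J.zero_mem
    | add x y hx hy ihx ihy => simpa using J.add_mem ihx ihy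
    | smul a x hx ih =>
        rw [smul_eq_mul, Derivation.leibniz, smul_eq_mul, smul_eq_mul]
        exact J.add_mem (J.mul_mem_left _ ih) (J.mul_mem_left _ (hδJ a))
  set S : Set R := {y : R | ∃ j ∈ J, ∃ r : R, y = ι j * r} with hS
  set C : AddSubgroup R := AddSubgroup.closure S with hCdef
  have hgen : ∀ j ∈ J, ∀ r : R, ι j * r ∈ C :=
    fun j hj r => AddSubgroup.subset_closure ⟨j, hj, r, rfl⟩
  have hCr : ∀ s : R, ∀ c ∈ C, c * s ∈ C := by
    intro s c hc
    refine AddSubgroup.closure_induction (p := fun x _ => x * s ∈ C) ?_ ?_ ?_ ?_ hc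
    · rintro x ⟨j, hj, r, rfl⟩; rw [mul_assoc]; exact hgen j hj _
    · show (0:R) * s ∈ C; rw [zero_mul]; exact zero_mem C
    · intro x y _ _ hx hy; show (x + y) * s ∈ C; rw [add_mul]; exact add_mem hx hy
    · intro x _ hx; show -x * s ∈ C; rw [neg_mul]; exact neg_mem hx
  have hz : ∀ c ∈ C, z * c ∈ C := by
    intro c hc
    refine AddSubgroup.closure_induction (p := fun x _ => z * x ∈ C) ?_ ?_ ?_ ?_ hc
    · rintro x ⟨j, hj, r, rfl⟩
      have h1 : z * (ι j * r) = ι (δ j) * r + ι j * (z * r) := by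
        rw [← mul_assoc, sub_eq_iff_eq_add.mp (hcomm j), add_mul, mul_assoc]
      rw [h1]; exact add_mem (hgen _ (hJδ j hj) r) (hgen j hj _)
    · show z * (0:R) ∈ C; rw [mul_zero]; exact zero_mem C
    · intro x y _ _ hx hy; show z * (x + y) ∈ C; rw [mul_add]; exact add_mem hx hy
    · intro x _ hx; show z * -x ∈ C; rw [mul_neg]; exact neg_mem hx
  have hι : ∀ a : A, ∀ c ∈ C, ι a * c ∈ C := by
    intro a c hc
    refine AddSubgroup.closure_induction (p := fun x _ => ι a * x ∈ C) ?_ ?_ ?_ ?_ hc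
    · rintro x ⟨j, hj, r, rfl⟩
      rw [← mul_assoc, ← map_mul]
      exact hgen _ (J.mul_mem_left a hj) r
    · show ι a * (0:R) ∈ C; rw [mul_zero]; exact zero_mem C
    · intro x y _ _ hx hy; show ι a * (x + y) ∈ C; rw [mul_add]; exact add_mem hx hy
    · intro x _ hx; show ι a * -x ∈ C; rw [mul_neg]; exact neg_mem hx
  have hmono : ∀ (a : A) (n : ℕ), ∀ c ∈ C, (ι a * z ^ n) * c ∈ C := by
    intro a n
    induction n with
    | zero => intro c hc; simpa using hι a c hc
    | succ n ih =>
        intro c hc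
        have h1 : ι a * z ^ (n + 1) * c = ι a * z ^ n * (z * c) := by
          rw [pow_succ]; noncomm_ring
        rw [h1]; exact ih _ (hz c hc)
  have hCl : ∀ s : R, ∀ c ∈ C, s * c ∈ C := by
    intro s c hc
    obtain ⟨p, hp, -⟩ := hrepr s
    rw [hp, Polynomial.sum_def, Finset.sum_mul]
    exact AddSubgroup.sum_mem C fun n _ => hmono _ _ c hc
  -- the two-sided ideal with carrier C
  set L : TwoSidedIdeal R := TwoSidedIdeal.mk' (C : Set R) (zero_mem C)
    (fun hx hy => add_mem hx hy) (fun hx => neg_mem hx)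
    (fun {x y} hy => hCl x y hy) (fun {x y} hx => hCr y x hx) with hL
  have hset : (K : Set R) = (C : Set R) := by
    apply Set.Subset.antisymm
    · intro x hx
      rw [SetLike.mem_coe, hK] at hx
      have hsub : ι '' (J : Set A) ⊆ (L : Set R) := by
        rintro _ ⟨j, hj, rfl⟩
        rw [SetLike.mem_coe, hL, TwoSidedIdeal.mem_mk']
        simpa using hgen j hj 1
      have := TwoSidedIdeal.mem_span_iff.mp hx L hsub
      rw [hL, TwoSidedIdeal.mem_mk'] at this
      exact this
    · intro x hx
      rw [SetLike.mem_coe] at hx ⊢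
      refine AddSubgroup.closure_induction (p := fun w _ => w ∈ K) ?_ ?_ ?_ ?_ hx
      · rintro w ⟨j, hj, r, rfl⟩
        exact K.mul_mem_right _ _ (hK ▸ TwoSidedIdeal.subset_span ⟨j, hj, rfl⟩)
      · show (0:R) ∈ K; exact K.zero_mem
      · intro a b _ _ ha hb; show a + b ∈ K; exact K.add_mem ha hb
      · intro a _ ha; show -a ∈ K; exact K.neg_mem ha
  have hKC : ∀ w : R, w ∈ K ↔ w ∈ C := by
    intro w
    constructor
    · intro h; have := hset ▸ (SetLike.mem_coe.mpr h); exact this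
    · intro h
      have : w ∈ (K : Set R) := hset ▸ (SetLike.mem_coe.mpr h)
      exact this
  -- commutator machinery
  have cmsym : ∀ x y : R, x * y - y * x ∈ C → y * x - x * y ∈ C := by
    intro x y h
    have := neg_mem h; rwa [neg_sub] at this
  have cmadd : ∀ x x' y : R, x * y - y * x ∈ C → x' * y - y * x' ∈ C →
      (x + x') * y - y * (x + x') ∈ C := by
    intro x x' y hx hx'
    have := add_mem hx hx'
    rwa [show (x * y - y * x) + (x' * y - y * x') = (x + x') * y - y * (x + x') by
      noncomm_ring] at this
  have cmmul : ∀ x x' y : R, x * y - y * x ∈ C → x' * y - y * x' ∈ C →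
      (x * x') * y - y * (x * x') ∈ C := by
    intro x x' y hx hx'
    have h1 := hCl x _ hx'
    have h2 := hCr x' _ hx
    have := add_mem h1 h2
    rwa [show x * (x' * y - y * x') + (x * y - y * x) * x'
        = (x * x') * y - y * (x * x') by noncomm_ring] at this
  have cmmulr : ∀ x y y' : R, x * y - y * x ∈ C → x * y' - y' * x ∈ C →
      x * (y * y') - (y * y') * x ∈ C := by
    intro x y y' h h'
    exact cmsym _ _ (cmmul y y' x (cmsym _ _ h) (cmsym _ _ h'))
  have cm0 : ∀ y : R, (0 : R) * y - y * 0 ∈ C := by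
    intro y; rw [zero_mul, mul_zero, sub_zero]; exact zero_mem C
  have hPιι : ∀ a b : A, ι a * ι b - ι b * ι a ∈ C := by
    intro a b
    rw [← map_mul, ← map_mul, mul_comm, sub_self]; exact zero_mem C
  have hPzι : ∀ b : A, z * ι b - ι b * z ∈ C := by
    intro b
    rw [hcomm b]
    simpa using hgen _ (hδJ b) 1
  have hPzz : z * z - z * z ∈ C := by rw [sub_self]; exact zero_mem C
  -- Q x : commutes mod C with z and all ι b
  have hQmono : ∀ (a : A) (n : ℕ),
      ((ι a * z ^ n) * z - z * (ι a * z ^ n) ∈ C) ∧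
        ∀ b : A, (ι a * z ^ n) * ι b - ι b * (ι a * z ^ n) ∈ C := by
    intro a n
    induction n with
    | zero =>
        constructor
        · simpa using cmsym _ _ (hPzι a)
        · intro b; simpa using hPιι a b
    | succ n ih =>
        have hrw : ι a * z ^ (n + 1) = (ι a * z ^ n) * z := by
          rw [pow_succ, mul_assoc]
        rw [hrw]
        exact ⟨cmmul _ _ _ ih.1 hPzz, fun b => cmmul _ _ _ (ih.2 b) (hPzι b)⟩
  have hQpow : ∀ (a : A) (n m : ℕ),
      (ι a * z ^ n) * z ^ m - z ^ m * (ι a * z ^ n) ∈ C := by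
    intro a n m
    induction m with
    | zero => simp only [pow_zero, mul_one, one_mul, sub_self]; exact zero_mem C
    | succ m ih => rw [pow_succ]; exact cmmulr _ _ _ ih (hQmono a n).1
  have hPmm : ∀ (a : A) (n : ℕ) (b : A) (m : ℕ),
      (ι a * z ^ n) * (ι b * z ^ m) - (ι b * z ^ m) * (ι a * z ^ n) ∈ C := by
    intro a n b m
    exact cmmulr _ _ _ ((hQmono a n).2 b) (hQpow a n m)
  have hPsum : ∀ (s : Finset ℕ) (f : ℕ → R) (y : R),
      (∀ i ∈ s, f i * y - y * f i ∈ C) → (∑ i ∈ s, f i) * y - y * (∑ i ∈ s, f i) ∈ C := by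
    intro s f y h
    exact Finset.sum_induction f (fun x => x * y - y * x ∈ C)
      (fun a b ha hb => cmadd a b y ha hb) (cm0 y) h
  have part2 : ∀ x y : R, x * y - y * x ∈ K := by
    intro x y
    rw [hKC]
    obtain ⟨p, hp, -⟩ := hrepr x
    obtain ⟨q, hq, -⟩ := hrepr y
    rw [hp, hq, Polynomial.sum_def, Polynomial.sum_def]
    refine hPsum _ _ _ fun n _ => ?_
    refine cmsym _ _ (hPsum _ _ _ fun m _ => ?_)
    exact cmsym _ _ (hPmm _ _ _ _)
  refine ⟨hset, part2, ?_⟩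
  intro I hI
  rw [hK]
  intro x hx
  refine TwoSidedIdeal.mem_span_iff.mp hx I ?_
  rintro _ ⟨j, hj, rfl⟩
  rw [hJ] at hj
  induction hj using Submodule.span_induction with
  | mem w hw =>
      obtain ⟨b, rfl⟩ := hw
      rw [← hcomm b]
      exact hI z (ι b)
  | zero => rw [map_zero]; exact I.zero_mem
  | add u v hu hv ihu ihv => rw [map_add]; exact I.add_mem ihu ihv
  | smul a u hu ihu =>
      rw [smul_eq_mul, map_mul]
      exact I.mul_mem_left _ _ ihu
end

section
/- If A is δ-primitive (some maximal ideal of A contains no nonzero δ-ideal), then the Poisson algebra A[z] with bracket {−,−}_δ is Poisson primitive, i.e., some maximal ideal of A[z] contains no nonzero Poisson ideal. -/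
open Polynomial

theorem stmt_12 {A : Type*} [CommRing A] [Algebra ℂ A]
    (δ : Derivation ℂ A A) (hδ : δ ≠ 0)
    (br : Polynomial A → Polynomial A → Polynomial A) (hbr : IsDeltaBracket δ br)
    (hprim : ∃ M : Ideal A, M.IsMaximal ∧
      ∀ I : Ideal A, IsDeltaIdeal δ I → I ≠ ⊥ → ¬ I ≤ M) :
    ∃ N : Ideal (Polynomial A), N.IsMaximal ∧
      ∀ I : Ideal (Polynomial A), IsPoissonIdeal br I → I ≠ ⊥ → ¬ I ≤ N := by
  classical
  obtain ⟨M, hM, hMcore⟩ := hprim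
  obtain ⟨hP, hCC, hXC⟩ := hbr
  -- basic bracket properties
  have hzero_l : ∀ x : Polynomial A, br 0 x = 0 := by
    intro x
    have := hP.smul_left 0 0 x
    simpa using this
  have hadd_r : ∀ x y z : Polynomial A, br x (y + z) = br x y + br x z := by
    intro x y z
    rw [hP.antisymm, hP.add_left, hP.antisymm y x, hP.antisymm z x]
    ring
  have hCX : ∀ a : A, br (C a) X = - C (δ a) := by
    intro a; rw [hP.antisymm, hXC]
  have hCf : ∀ (a : A) (f : Polynomial A),
      br (C a) f = -(derivative f * C (δ a)) := by
    intro a f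
    induction f using Polynomial.induction_on with
    | C b => simp [hCC]
    | add p q hp hq => rw [hadd_r, hp, hq, derivative_add]; ring
    | monomial n b ih =>
      have hx : (C b : Polynomial A) * X ^ (n + 1) = (C b * X ^ n) * X := by ring
      rw [hx, hP.leibniz, ih, hCX]
      simp only [derivative_mul, derivative_X, derivative_C, derivative_X_pow]
      ring
  -- the annihilator of δ(A)
  set Ann : Ideal A :=
    { carrier := {x | ∀ b, x * δ b = 0}
      add_mem' := by intro x y hx hy b; rw [add_mul, hx b, hy b, add_zero]
      zero_mem' := by intro b; rw [zero_mul]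
      smul_mem' := by intro c x hx b; rw [smul_eq_mul, mul_assoc, hx b, mul_zero] }
    with hAnn_def
  have hAnn_mem : ∀ x : A, x ∈ Ann ↔ ∀ b, x * δ b = 0 := fun x => Iff.rfl
  have hAnnδ : IsDeltaIdeal δ Ann := by
    intro x hx
    rw [hAnn_mem] at hx ⊢
    intro b
    have h1 : δ (x * δ b) = 0 := by rw [hx b]; simp
    rw [Derivation.leibniz] at h1
    have h2 : x * δ (δ b) = 0 := hx (δ b)
    have : x • δ (δ b) + δ b • δ x = 0 := h1
    rw [smul_eq_mul, smul_eq_mul, h2, zero_add] at this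
    rw [mul_comm]; exact this
  set D : Ideal A := Ideal.span (Set.range fun x => δ x) with hD_def
  obtain ⟨a₀, ha₀⟩ : ∃ a, δ a ≠ 0 := by
    by_contra h
    push_neg at h
    exact hδ (by ext x; simpa using h x)
  have hD0 : D ≠ ⊥ := by
    intro h
    exact ha₀ (by
      have : δ a₀ ∈ D := Ideal.subset_span ⟨a₀, rfl⟩
      rwa [h, Ideal.mem_bot] at this)
  have hDδ : IsDeltaIdeal δ D := by
    intro x hx
    refine Submodule.span_induction (p := fun y _ => δ y ∈ D) ?_ ?_ ?_ ?_ hx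
    · rintro y ⟨b, rfl⟩
      exact Ideal.subset_span ⟨δ b, rfl⟩
    · simp
    · intro y z _ _ hy hz
      rw [map_add]; exact add_mem hy hz
    · intro c y hy hδy
      rw [smul_eq_mul, Derivation.leibniz, smul_eq_mul, smul_eq_mul]
      exact add_mem (Ideal.mul_mem_left _ _ hδy) (Ideal.mul_mem_left _ _ (Ideal.subset_span ⟨c, rfl⟩))
  -- the annihilator is trivial
  have hAnnbot : Ann = ⊥ := by
    by_contra hA
    have hmul : Ann * D ≤ M := by
      refine le_trans (Ideal.mul_le.mpr ?_) bot_le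
      intro x hx y hy
      rw [Ideal.mem_bot]
      refine Submodule.span_induction (p := fun z _ => x * z = 0) ?_ ?_ ?_ ?_ hy
      · rintro z ⟨b, rfl⟩; exact hx b
      · simp
      · intro z w _ _ hz hw; rw [mul_add, hz, hw, add_zero]
      · intro c z _ hz; rw [smul_eq_mul, ← mul_assoc, mul_comm x c, mul_assoc, hz, mul_zero]
    rcases (hM.isPrime.mul_le).mp hmul with h | h
    · exact hMcore Ann hAnnδ hA h
    · exact hMcore D hDδ hD0 h
  -- the maximal ideal of A[z]
  have hsurj : Function.Surjective (Polynomial.evalRingHom (0 : A)) := by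
    intro a; exact ⟨C a, by simp⟩
  refine ⟨Ideal.comap (Polynomial.evalRingHom (0 : A)) M,
    Ideal.comap_isMaximal_of_surjective _ hsurj, ?_⟩
  intro I hI hI0 hIN
  -- find a nonzero element of minimal degree in I
  set S : Set ℕ := {m | ∃ g ∈ I, g ≠ 0 ∧ g.natDegree = m} with hS_def
  have hSne : S.Nonempty := by
    obtain ⟨g, hgI, hg0⟩ := Submodule.exists_mem_ne_zero_of_ne_bot hI0
    exact ⟨g.natDegree, g, hgI, hg0, rfl⟩
  obtain ⟨f, hfI, hf0, hfn⟩ : ∃ f ∈ I, f ≠ 0 ∧ f.natDegree = sInf S := Nat.sInf_mem hSne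
  set n := sInf S with hn_def
  have hmin : ∀ g ∈ I, g ≠ 0 → n ≤ g.natDegree := by
    intro g hgI hg0
    exact Nat.sInf_le ⟨g, hgI, hg0, rfl⟩
  -- the minimal degree must be 0
  have hn0 : n = 0 := by
    by_contra hn'
    have key : ∀ b : A, derivative f * C (δ b) = 0 := by
      intro b
      have hmem : br (C b) f ∈ I := hI _ f hfI
      rw [hCf] at hmem
      have hmem' : derivative f * C (δ b) ∈ I := by
        have := neg_mem hmem; simpa using this
      by_contra hg0
      have h1 := hmin _ hmem' hg0
      have h2 := Polynomial.natDegree_mul_le (p := derivative f) (q := C (δ b))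
      have h3 := Polynomial.natDegree_derivative_lt (p := f) (by rw [hfn]; exact hn')
      rw [hfn] at h3
      simp only [Polynomial.natDegree_C, add_zero] at h2
      omega
    have hc : f.coeff n * (n : A) ∈ Ann := by
      rw [hAnn_mem]
      intro b
      have h1 := congrArg (fun p => Polynomial.coeff p (n - 1)) (key b)
      simp only [Polynomial.coeff_mul_C, Polynomial.coeff_derivative,
        Polynomial.coeff_zero] at h1
      have hsucc : n - 1 + 1 = n := Nat.succ_pred_eq_of_pos (Nat.pos_of_ne_zero hn')
      rw [hsucc] at h1
      have hcast : ((n - 1 : ℕ) : A) + 1 = (n : A) := by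
        conv_rhs => rw [← hsucc]
        push_cast
        ring
      rw [hcast] at h1
      rw [mul_assoc] at h1 ⊢
      exact h1
    rw [hAnnbot, Ideal.mem_bot] at hc
    have hsm : (n : ℂ) • f.coeff n = 0 := by
      rw [Nat.cast_smul_eq_nsmul, nsmul_eq_mul, mul_comm]
      exact hc
    have hne : (n : ℂ) ≠ 0 := Nat.cast_ne_zero.mpr hn'
    have hcoeff : f.coeff n = 0 := by
      have := congrArg (fun x => (n : ℂ)⁻¹ • x) hsm
      simpa [inv_smul_smul₀ hne] using this
    have : f.leadingCoeff ≠ 0 := Polynomial.leadingCoeff_ne_zero.mpr hf0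
    rw [Polynomial.leadingCoeff, hfn] at this
    exact this hcoeff
  -- I contains a nonzero constant; its contraction to A is a nonzero δ-ideal
  have hfC : f = C (f.coeff 0) := Polynomial.eq_C_of_natDegree_eq_zero (by rw [hfn, hn0])
  have ha : f.coeff 0 ≠ 0 := by
    intro h; apply hf0; rw [hfC, h, map_zero]
  set J : Ideal A := Ideal.comap (Polynomial.C : A →+* Polynomial A) I with hJ_def
  have hJδ : IsDeltaIdeal δ J := by
    intro b hb
    have : br X (C b) ∈ I := hI _ _ hb
    rwa [hXC] at this
  have hJ0 : J ≠ ⊥ := by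
    intro h
    have : f.coeff 0 ∈ J := by
      show C (f.coeff 0) ∈ I
      rw [← hfC]; exact hfI
    rw [h, Ideal.mem_bot] at this
    exact ha this
  have hJM := hMcore J hJδ hJ0
  apply hJM
  intro b hb
  have : C b ∈ Ideal.comap (Polynomial.evalRingHom (0 : A)) M := hIN hb
  simpa using this
end

section
/- If A is δ-G, meaning the intersection of all nonzero δ-prime ideals of A is nonzero, then A[z] with the Poisson bracket {−,−}_δ is Poisson primitive. -/
open Polynomial

theorem stmt_13 {A : Type*} [CommRing A] [Algebra ℂ A] [IsDomain A]
    (δ : Derivation ℂ A A) (hδ : δ ≠ 0)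
    (br : Polynomial A → Polynomial A → Polynomial A) (hbr : IsDeltaBracket δ br)
    (hG : sInf {P : Ideal A | IsDeltaPrime δ P ∧ P ≠ ⊥} ≠ ⊥) :
    ∃ N : Ideal (Polynomial A), N.IsMaximal ∧
      ∀ I : Ideal (Polynomial A), IsPoissonIdeal br I → I ≠ ⊥ → ¬ I ≤ N := by
  classical
  have hchar : CharZero A :=
    charZero_of_injective_algebraMap (algebraMap ℂ A).injective
  obtain ⟨hpb, hCC, hXC⟩ := hbr
  -- basic bracket facts
  have h0l : ∀ x, br 0 x = 0 := by
    intro x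
    have h := (hpb.add_left 0 0 x).symm
    rw [add_zero] at h
    exact add_eq_left.mp h
  have hadd_right : ∀ x a b, br x (a + b) = br x a + br x b := by
    intro x a b
    rw [hpb.antisymm, hpb.add_left, hpb.antisymm a x, hpb.antisymm b x]
    ring
  have hCbX : ∀ b : A, br (C b) X = -C (δ b) := by
    intro b; rw [hpb.antisymm, hXC]
  -- key computation
  have hD : ∀ (b : A) (p : Polynomial A),
      br (C b) p = -(C (δ b) * derivative p) := by
    intro b p
    induction p using Polynomial.induction_on with
    | C a => simp [hCC]
    | add p q hp hq => rw [hadd_right, hp, hq, derivative_add]; ring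
    | monomial n a ih =>
        have hrw : C a * X ^ (n + 1) = C a * X ^ n * X := by ring
        have hd : derivative (C a * X ^ n * X) =
            derivative (C a * X ^ n) * X + C a * X ^ n := by
          rw [derivative_mul (f := C a * X ^ n), derivative_X, mul_one]
        rw [hrw, hpb.leibniz, ih, hCbX, hd]
        ring
  -- pick c in the intersection of nonzero δ-primes
  obtain ⟨c, hcmem, hc0⟩ := Submodule.ne_bot_iff _ |>.mp hG
  -- every nonzero δ-ideal contains a power of c
  have key : ∀ J : Ideal A, IsDeltaIdeal δ J → J ≠ ⊥ → ∃ k : ℕ, c ^ k ∈ J := by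
    intro J hJδ hJ0
    by_contra hk
    push_neg at hk
    set S : Set (Ideal A) := {Q | IsDeltaIdeal δ Q ∧ J ≤ Q ∧ ∀ k, c ^ k ∉ Q} with hS
    have hJS : J ∈ S := ⟨hJδ, le_refl _, hk⟩
    have hub : ∀ cs ⊆ S, IsChain (· ≤ ·) cs → ∀ y ∈ cs,
        ∃ ub ∈ S, ∀ z ∈ cs, z ≤ ub := by
      intro cs hsub hchain y hy
      refine ⟨sSup cs, ⟨?_, ?_, ?_⟩, fun z hz => le_sSup hz⟩
      · intro a ha
        rw [Submodule.mem_sSup_of_directed ⟨y, hy⟩ hchain.directedOn] at ha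
        obtain ⟨Q', hQ', ha'⟩ := ha
        exact le_sSup hQ' ((hsub hQ').1 a ha')
      · exact (hsub hy).2.1.trans (le_sSup hy)
      · intro k hkmem
        rw [Submodule.mem_sSup_of_directed ⟨y, hy⟩ hchain.directedOn] at hkmem
        obtain ⟨Q', hQ', hmem⟩ := hkmem
        exact (hsub hQ').2.2 k hmem
    obtain ⟨Q, hJQle, hQmax⟩ := zorn_le_nonempty₀ S hub J hJS
    obtain ⟨hQδ, hJQ, hQpow⟩ := hQmax.prop
    have hQprime : IsDeltaPrime δ Q := by
      refine ⟨?_, hQδ, ?_⟩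
      · intro htop
        exact hQpow 0 (htop ▸ Submodule.mem_top)
      · intro I1 I2 hI1 hI2 hmul
        by_contra hcon
        push_neg at hcon
        obtain ⟨h1, h2⟩ := hcon
        have hget : ∀ R : Ideal A, IsDeltaIdeal δ R → ¬R ≤ Q →
            ∃ m, c ^ m ∈ Q ⊔ R := by
          intro R hR hRQ
          by_contra hg
          push_neg at hg
          have hsupδ : IsDeltaIdeal δ (Q ⊔ R) := by
            intro a ha
            rw [Submodule.mem_sup] at ha
            obtain ⟨x, hx, y, hy, rfl⟩ := ha
            rw [map_add]
            exact Submodule.add_mem _ (Submodule.mem_sup_left (hQδ x hx))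
              (Submodule.mem_sup_right (hR y hy))
          have hmemS : Q ⊔ R ∈ S := ⟨hsupδ, hJQ.trans le_sup_left, hg⟩
          have := hQmax.2 hmemS le_sup_left
          exact hRQ (le_sup_right.trans this)
        obtain ⟨m, hm⟩ := hget I1 hI1 h1
        obtain ⟨n, hn⟩ := hget I2 hI2 h2
        have hmul2 : (Q ⊔ I1) * (Q ⊔ I2) ≤ Q := by
          rw [Ideal.sup_mul, Ideal.mul_sup, Ideal.mul_sup]
          refine sup_le (sup_le ?_ ?_) (sup_le ?_ ?_)
          · exact le_trans Ideal.mul_le_right le_rfl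
          · exact Ideal.mul_le_left
          · exact Ideal.mul_le_right
          · exact hmul
        have : c ^ (m + n) ∈ Q := by
          rw [pow_add]
          exact hmul2 (Ideal.mul_mem_mul hm hn)
        exact hQpow (m + n) this
    have hQne : Q ≠ ⊥ := by
      intro h
      exact hJ0 (le_bot_iff.mp (h ▸ hJQ))
    have hle : sInf {P : Ideal A | IsDeltaPrime δ P ∧ P ≠ ⊥} ≤ Q :=
      sInf_le ⟨hQprime, hQne⟩
    exact hQpow 1 (by simpa using hle hcmem)
  obtain ⟨N, hNmax, hcN⟩ :
      ∃ N : Ideal (Polynomial A), N.IsMaximal ∧ C c ∉ N := by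
    by_contra h
    push_neg at h
    have hmem : (C c : Polynomial A) ∈ (⊥ : Ideal (Polynomial A)).jacobson := by
      rw [Ideal.jacobson, Ideal.mem_sInf]
      rintro J ⟨-, hJ⟩
      exact h J hJ
    rw [Ideal.mem_jacobson_bot] at hmem
    have hu := hmem X
    rw [Polynomial.isUnit_iff] at hu
    obtain ⟨r, -, hr⟩ := hu
    have hco := congrArg (fun q => Polynomial.coeff q 1) hr
    simp [coeff_C, coeff_one] at hco
    exact hc0 hco.symm
  refine ⟨N, hNmax, ?_⟩
  intro I hIP hI0 hIN
  -- minimal-degree nonzero element of I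
  obtain ⟨p₀, hp₀I, hp₀0⟩ := Submodule.ne_bot_iff _ |>.mp hI0
  have hex : ∃ n : ℕ, ∃ p, p ∈ I ∧ p ≠ 0 ∧ p.natDegree = n :=
    ⟨p₀.natDegree, p₀, hp₀I, hp₀0, rfl⟩
  obtain ⟨p, hpI, hpne, hpdeg⟩ := Nat.find_spec hex
  have hmin : ∀ q, q ∈ I → q ≠ 0 → Nat.find hex ≤ q.natDegree := by
    intro q hqI hq0
    exact Nat.find_min' hex ⟨q, hqI, hq0, rfl⟩
  obtain ⟨b, hb⟩ : ∃ b, δ b ≠ 0 := by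
    by_contra h
    push_neg at h
    exact hδ (by ext x; simp [h x])
  have hq : br (C b) p ∈ I := hIP (C b) p hpI
  rw [hD] at hq
  have hDp : derivative p = 0 := by
    by_contra hDp
    have hq0 : -(C (δ b) * derivative p) ≠ 0 := by
      simp only [neg_ne_zero]
      exact mul_ne_zero (by simpa using hb) hDp
    have hpd0 : p.natDegree ≠ 0 := by
      intro h0
      exact hDp (by rw [Polynomial.eq_C_of_natDegree_eq_zero h0]; simp)
    have hlt : (-(C (δ b) * derivative p)).natDegree < Nat.find hex := by
      rw [natDegree_neg, Polynomial.natDegree_C_mul hb, ← hpdeg]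
      exact Polynomial.natDegree_derivative_lt hpd0
    exact absurd (hmin _ hq hq0) (not_le.mpr hlt)
  have hdeg0 : p.natDegree = 0 :=
    Polynomial.natDegree_eq_zero_of_derivative_eq_zero hDp
  have hpa : p = C (p.coeff 0) := Polynomial.eq_C_of_natDegree_eq_zero hdeg0
  have ha0 : p.coeff 0 ≠ 0 := by
    intro h
    exact hpne (by rw [hpa, h, map_zero])
  set J : Ideal A := I.comap (C : A →+* Polynomial A) with hJ
  have hJδ : IsDeltaIdeal δ J := by
    intro x hx
    have hx' : C x ∈ I := hx
    have := hIP X (C x) hx'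
    rw [hXC] at this
    exact this
  have hJ0 : J ≠ ⊥ := by
    intro h
    have : p.coeff 0 ∈ J := by
      show C (p.coeff 0) ∈ I
      rw [← hpa]; exact hpI
    rw [h] at this
    exact ha0 (Submodule.mem_bot _ |>.mp this)
  obtain ⟨k, hk⟩ := key J hJδ hJ0
  have hCk : (C c : Polynomial A) ^ k ∈ N := by
    have : C (c ^ k) ∈ I := hk
    rw [map_pow] at this
    exact hIN this
  exact hcN (hNmax.isPrime.mem_of_pow_mem k hCk)
end

section
/- If A is an affine (finitely generated) commutative C-algebra with nonzero derivation δ and A[z] is Poisson primitive for the bracket {−,−}_δ, then A is δ-primitive. -/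
open Polynomial

theorem stmt_14 {A : Type*} [CommRing A] [Algebra ℂ A] [Algebra.FiniteType ℂ A]
    (δ : Derivation ℂ A A) (hδ : δ ≠ 0)
    (br : Polynomial A → Polynomial A → Polynomial A) (hbr : IsDeltaBracket δ br)
    (hPprim : ∃ N : Ideal (Polynomial A), N.IsMaximal ∧
      ∀ I : Ideal (Polynomial A), IsPoissonIdeal br I → I ≠ ⊥ → ¬ I ≤ N) :
    ∃ M : Ideal A, M.IsMaximal ∧
      ∀ I : Ideal A, IsDeltaIdeal δ I → I ≠ ⊥ → ¬ I ≤ M := by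
  obtain ⟨N, hNmax, hNcore⟩ := hPprim
  obtain ⟨hP, hCC, hXC⟩ := hbr
  haveI : IsJacobsonRing A := isJacobsonRing_of_finiteType (A := ℂ)
  -- basic bracket facts
  have add_right : ∀ a b c : Polynomial A, br a (b + c) = br a b + br a c := by
    intro a b c
    rw [hP.antisymm a (b + c), hP.add_left, hP.antisymm b a, hP.antisymm c a]
    ring
  have leib_left : ∀ a b c : Polynomial A, br (a * b) c = br a c * b + a * br b c := by
    intro a b c
    rw [hP.antisymm (a * b) c, hP.leibniz, hP.antisymm a c, hP.antisymm b c]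
    ring
  have zero_right : ∀ a : Polynomial A, br a 0 = 0 := by
    intro a
    have := add_right a 0 0
    rw [add_zero] at this
    exact (add_eq_right.mp this.symm)
  refine ⟨N.comap (Polynomial.C : A →+* Polynomial A), Polynomial.isMaximal_comap_C_of_isJacobsonRing (hP := hNmax), ?_⟩
  intro I hI hIne hIle
  set J : Ideal (Polynomial A) := I.map (Polynomial.C : A →+* Polynomial A) with hJ
  -- J is a Poisson ideal
  have hgen : ∀ i ∈ I, ∀ f : Polynomial A, br f (Polynomial.C i) ∈ J := by
    intro i hi f
    induction f using Polynomial.induction_on with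
    | C a => rw [hCC]; exact J.zero_mem
    | add p q hp hq => rw [hP.add_left]; exact J.add_mem hp hq
    | monomial n a hmn =>
        have : (Polynomial.C a * Polynomial.X ^ (n + 1)) =
            (Polynomial.C a * Polynomial.X ^ n) * Polynomial.X := by ring
        rw [this, leib_left]
        refine J.add_mem (J.mul_mem_right _ hmn) (J.mul_mem_left _ ?_)
        rw [hXC]
        exact Ideal.mem_map_of_mem _ (hI i hi)
  have hJP : IsPoissonIdeal br J := by
    intro f x hx
    have hx' : x ∈ Ideal.span ((Polynomial.C : A →+* Polynomial A) '' ↑I) := hx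
    refine Submodule.span_induction ?_ ?_ ?_ ?_ hx'
    · rintro y ⟨i, hi, rfl⟩; exact hgen i hi f
    · rw [zero_right]; exact J.zero_mem
    · intro y z _ _ hy hz
      rw [add_right]; exact J.add_mem hy hz
    · intro g y hyJ hy
      have hyJ' : y ∈ J := hyJ
      rw [smul_eq_mul, hP.leibniz]
      exact J.add_mem (J.mul_mem_left _ hyJ') (J.mul_mem_left _ hy)
  -- J nonzero
  have hJne : J ≠ ⊥ := by
    obtain ⟨i, hiI, hine⟩ := Submodule.exists_mem_ne_zero_of_ne_bot hIne
    intro h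
    have : Polynomial.C i ∈ J := Ideal.mem_map_of_mem _ hiI
    rw [h, Ideal.mem_bot] at this
    exact hine (by simpa using Polynomial.C_injective (this.trans (map_zero _).symm))
  have hJle : J ≤ N := Ideal.map_le_iff_le_comap.mpr hIle
  exact hNcore J hJP hJne hJle
end

section
/- Let f, g ∈ C[x,y,z] and F = (f, g, 0). Then F determines a Poisson bracket on C[x,y,z] via {y,z}=f, {z,x}=g, {x,y}=0 if and only if there exist h ∈ C[x,y,z] and f₁, g₁ ∈ C[x,y] with f = h f₁ and g = h g₁. -/
open MvPolynomial

/-- The triple `(f,g,h)` determines a Poisson bracket on `ℂ[x,y,z]` via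
`{y,z} = f`, `{z,x} = g`, `{x,y} = h`. -/
def IsPoissonTriple (f g h : MvPolynomial (Fin 3) ℂ) : Prop :=
  ∃ br : MvPolynomial (Fin 3) ℂ → MvPolynomial (Fin 3) ℂ → MvPolynomial (Fin 3) ℂ,
    IsPoissonBracket br ∧ br (X 1) (X 2) = f ∧ br (X 2) (X 0) = g ∧ br (X 0) (X 1) = h

namespace Stmt15Aux
noncomputable section

abbrev R3 := MvPolynomial (Fin 3) ℂ

lemma pd_comm (i j : Fin 3) (p : R3) : pderiv i (pderiv j p) = pderiv j (pderiv i p) := by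
  induction p using MvPolynomial.induction_on with
  | C a => simp
  | add p q hp hq => simp [hp, hq]
  | mul_X p n hp =>
    simp only [pderiv_mul, map_add, hp]
    fin_cases n <;> fin_cases i <;> fin_cases j <;>
      simp [pderiv_X_self, pderiv_X_of_ne, pderiv_mul]

/-- The bracket determined by the triple `(f, g, 0)`. -/
def pb (f g a b : R3) : R3 :=
  f * (pderiv 1 a * pderiv 2 b - pderiv 2 a * pderiv 1 b)
  + g * (pderiv 2 a * pderiv 0 b - pderiv 0 a * pderiv 2 b)

lemma jacobiator (f g a b c : R3) :
    pb f g a (pb f g b c) + pb f g b (pb f g c a) + pb f g c (pb f g a b) =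
      (f * pderiv 2 g - g * pderiv 2 f) *
        (pderiv 0 a * (pderiv 1 b * pderiv 2 c - pderiv 2 b * pderiv 1 c)
        - pderiv 1 a * (pderiv 0 b * pderiv 2 c - pderiv 2 b * pderiv 0 c)
        + pderiv 2 a * (pderiv 0 b * pderiv 1 c - pderiv 1 b * pderiv 0 c)) := by
  have c10 : ∀ p : R3, pderiv 1 (pderiv 0 p) = pderiv 0 (pderiv 1 p) := fun p => pd_comm 1 0 p
  have c20 : ∀ p : R3, pderiv 2 (pderiv 0 p) = pderiv 0 (pderiv 2 p) := fun p => pd_comm 2 0 p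
  have c21 : ∀ p : R3, pderiv 2 (pderiv 1 p) = pderiv 1 (pderiv 2 p) := fun p => pd_comm 2 1 p
  simp only [pb, map_add, map_sub, pderiv_mul, c10, c20, c21]
  ring

lemma mem_adjoin_iff (p : R3) :
    p ∈ Algebra.adjoin ℂ {X 0, X 1} ↔ (↑p.vars : Set (Fin 3)) ⊆ ({0, 1} : Set (Fin 3)) := by
  have himg : (X '' ({0, 1} : Set (Fin 3)) : Set R3) = {X 0, X 1} := Set.image_pair _ _ _
  have : Algebra.adjoin ℂ ({X 0, X 1} : Set R3) = supported ℂ ({0, 1} : Set (Fin 3)) := by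
    rw [supported, himg]
  rw [this, mem_supported]

lemma pderiv2_eq_zero_of_mem (p : R3) (hp : p ∈ Algebra.adjoin ℂ {X 0, X 1}) :
    pderiv 2 p = 0 := by
  refine pderiv_eq_zero_of_notMem_vars fun h2 => ?_
  have := (mem_adjoin_iff p).1 hp h2
  simp at this

/-- `finSuccEquiv` intertwines `pderiv 0` and `Polynomial.derivative`. -/
lemma finSuccEquiv_pderiv_zero (q : MvPolynomial (Fin 3) ℂ) :
    finSuccEquiv ℂ 2 (pderiv 0 q) = Polynomial.derivative (finSuccEquiv ℂ 2 q) := by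
  induction q using MvPolynomial.induction_on with
  | C a =>
    simp [finSuccEquiv_apply]
  | add p q hp hq => simp [hp, hq]
  | mul_X p n hp =>
    rcases Fin.eq_zero_or_eq_succ n with rfl | ⟨j, rfl⟩
    · simp only [pderiv_mul, pderiv_X_self, map_add, map_mul, finSuccEquiv_X_zero, mul_one, hp,
        Polynomial.derivative_mul, Polynomial.derivative_X]
    · simp only [pderiv_mul, pderiv_X_of_ne (Fin.succ_ne_zero j), map_add, map_mul, mul_zero,
        finSuccEquiv_X_succ, hp, Polynomial.derivative_mul, Polynomial.derivative_C, add_zero,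
        mul_zero]

lemma finSuccEquiv_rename_succ (a : MvPolynomial (Fin 2) ℂ) :
    finSuccEquiv ℂ 2 (rename Fin.succ a) = Polynomial.C a := by
  induction a using MvPolynomial.induction_on with
  | C b => simp [finSuccEquiv_apply]
  | add p q hp hq => simp [hp, hq]
  | mul_X p j hp => simp [hp, finSuccEquiv_X_succ]

def sw : Fin 3 ≃ Fin 3 := Equiv.swap 0 2

lemma pderiv0_rename_sw (p : R3) :
    pderiv 0 (rename sw p) = rename sw (pderiv 2 p) := by
  have := pderiv_rename (sw.injective) (x := (2 : Fin 3)) (p := p)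
  simpa [sw, Equiv.swap_apply_right] using this

/-- If `p ∣ ∂p/∂z` then `∂p/∂z = 0`. -/
lemma pderiv2_eq_zero_of_self_dvd (p : R3) (hdvd : p ∣ pderiv 2 p) : pderiv 2 p = 0 := by
  set q : R3 := rename sw p with hq
  set P := finSuccEquiv ℂ 2 q with hP
  have hder : finSuccEquiv ℂ 2 (rename sw (pderiv 2 p)) = Polynomial.derivative P := by
    rw [← pderiv0_rename_sw, finSuccEquiv_pderiv_zero]
  have hPd : P ∣ Polynomial.derivative P := by
    rw [← hder]
    exact map_dvd ((finSuccEquiv ℂ 2).toAlgHom.comp (rename sw : R3 →ₐ[ℂ] R3)) hdvd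
  have hzero : Polynomial.derivative P = 0 := by
    by_contra hne
    by_cases hdeg : P.natDegree = 0
    · rw [Polynomial.eq_C_of_natDegree_eq_zero hdeg] at hne
      simp at hne
    · have h1 := Polynomial.natDegree_le_of_dvd hPd hne
      have h2 := Polynomial.natDegree_derivative_lt hdeg
      omega
  have : finSuccEquiv ℂ 2 (rename sw (pderiv 2 p)) = 0 := by rw [hder, hzero]
  have h3 : rename sw (pderiv 2 p) = 0 := by
    apply (finSuccEquiv ℂ 2).injective
    simpa using this
  have h4 := rename_injective (R := ℂ) sw sw.injective
  apply h4
  simpa using h3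

lemma mem_adjoin_of_pderiv2_eq_zero (p : R3) (hp : pderiv 2 p = 0) :
    p ∈ Algebra.adjoin ℂ {X 0, X 1} := by
  set P := finSuccEquiv ℂ 2 (rename sw p) with hP
  have hzero : Polynomial.derivative P = 0 := by
    rw [← finSuccEquiv_pderiv_zero, pderiv0_rename_sw, hp]
    simp
  have ha := Polynomial.eq_C_of_derivative_eq_zero hzero
  set a := P.coeff 0 with haa
  have hq : rename sw p = rename Fin.succ a := by
    apply (finSuccEquiv ℂ 2).injective
    rw [← hP, ha, finSuccEquiv_rename_succ]
  have hpp : p = rename (sw ∘ Fin.succ) a := by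
    have : rename sw (rename sw p) = rename sw (rename Fin.succ a) := by rw [hq]
    rw [rename_rename, rename_rename] at this
    have hid : (sw ∘ sw : Fin 3 → Fin 3) = id := by
      funext i; simp [sw, Function.comp]
    rw [hid, rename_id] at this
    exact this
  rw [mem_adjoin_iff]
  intro i hi
  rw [hpp] at hi
  have := vars_rename (sw ∘ Fin.succ) a hi
  simp only [Finset.mem_image] at this
  obtain ⟨j, _, rfl⟩ := this
  fin_cases j <;> simp [sw, Function.comp, Equiv.swap_apply_def]

/-- The factorization step. -/
lemma factor (f g : R3) (hrel : f * pderiv 2 g = g * pderiv 2 f) :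
    ∃ h f₁ g₁ : R3,
        f₁ ∈ Algebra.adjoin ℂ {X 0, X 1} ∧ g₁ ∈ Algebra.adjoin ℂ {X 0, X 1} ∧
        f = h * f₁ ∧ g = h * g₁ := by
  letI : GCDMonoid R3 := UniqueFactorizationMonoid.toGCDMonoid R3
  by_cases hd : gcd f g = 0
  · have h00 := hd
    rw [gcd_eq_zero_iff] at h00
    obtain ⟨hf0, hg0⟩ := h00
    exact ⟨0, 1, 1, Subalgebra.one_mem _, Subalgebra.one_mem _, by simp [hf0], by simp [hg0]⟩
  obtain ⟨f₁, hf⟩ := gcd_dvd_left f g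
  obtain ⟨g₁, hg⟩ := gcd_dvd_right f g
  set d := gcd f g with hdd
  have hrp : IsRelPrime f₁ g₁ := by
    intro u hu1 hu2
    have h1 : d * u ∣ f := hf ▸ mul_dvd_mul_left d hu1
    have h2 : d * u ∣ g := hg ▸ mul_dvd_mul_left d hu2
    have h3 : d * u ∣ d * 1 := by simpa using dvd_gcd h1 h2
    exact isUnit_of_dvd_one ((mul_dvd_mul_iff_left hd).1 h3)
  have key : f₁ * pderiv 2 g₁ = g₁ * pderiv 2 f₁ := by
    have h5 : d * (d * (f₁ * pderiv 2 g₁)) = d * (d * (g₁ * pderiv 2 f₁)) := by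
      have h6 := hrel
      rw [hf, hg] at h6
      simp only [pderiv_mul] at h6
      linear_combination h6
    exact mul_left_cancel₀ hd (mul_left_cancel₀ hd h5)
  have hf₁ : pderiv 2 f₁ = 0 := by
    apply pderiv2_eq_zero_of_self_dvd
    exact hrp.dvd_of_dvd_mul_left ⟨pderiv 2 g₁, by linear_combination -key⟩
  have hg₁ : pderiv 2 g₁ = 0 := by
    apply pderiv2_eq_zero_of_self_dvd
    exact hrp.symm.dvd_of_dvd_mul_left ⟨pderiv 2 f₁, by linear_combination key⟩
  exact ⟨d, f₁, g₁, mem_adjoin_of_pderiv2_eq_zero _ hf₁, mem_adjoin_of_pderiv2_eq_zero _ hg₁,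
    hf, hg⟩

end
end Stmt15Aux

theorem stmt_15 (f g : MvPolynomial (Fin 3) ℂ) :
    IsPoissonTriple f g 0 ↔
      ∃ h f₁ g₁ : MvPolynomial (Fin 3) ℂ,
        f₁ ∈ Algebra.adjoin ℂ {X 0, X 1} ∧ g₁ ∈ Algebra.adjoin ℂ {X 0, X 1} ∧
        f = h * f₁ ∧ g = h * g₁ := by
  constructor
  · rintro ⟨br, hbr, hyz, hzx, hxy⟩
    -- derived bracket properties
    have hsub : ∀ a b c, br a (b + c) = br a b + br a c := by
      intro a b c
      rw [hbr.antisymm, hbr.add_left, hbr.antisymm b a, hbr.antisymm c a]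
      ring
    have hsmul : ∀ (r : ℂ) a b, br a (r • b) = r • br a b := by
      intro r a b
      rw [hbr.antisymm, hbr.smul_left, hbr.antisymm b a]
      rw [smul_neg, neg_neg]
    have hself : ∀ a, br a a = 0 := by
      intro a
      have h := hbr.antisymm a a
      have h2 : (2 : ℂ) • br a a = 0 := by
        rw [two_smul]
        linear_combination h
      simpa using (smul_eq_zero.1 h2).resolve_left (by norm_num)
    have hone : ∀ a, br a 1 = 0 := by
      intro a
      have h := hbr.leibniz a 1 1
      simp only [mul_one, one_mul] at h
      linear_combination -h
    have hC : ∀ (r : ℂ) a, br a (MvPolynomial.C r) = 0 := by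
      intro r a
      have : (MvPolynomial.C r : MvPolynomial (Fin 3) ℂ) = r • 1 := by
        rw [MvPolynomial.smul_eq_C_mul, mul_one]
      rw [this, hsmul, hone, smul_zero]
    have hzero : ∀ a, br a (0 : MvPolynomial (Fin 3) ℂ) = 0 := by
      intro a
      have := hC 0 a
      simpa using this
    -- values on generators
    have bxz : br (X 0) (X 2) = -g := by rw [hbr.antisymm, hzx]
    have byx : br (X 1) (X 0) = 0 := by rw [hbr.antisymm, hxy]; simp
    -- br (X 0) p = -(g * ∂p/∂z)
    have brX0 : ∀ p, br (X 0) p = -(g * pderiv 2 p) := by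
      intro p
      induction p using MvPolynomial.induction_on with
      | C a => simp [hC]
      | add p q hp hq => rw [hsub, hp, hq, map_add]; ring
      | mul_X p n hp =>
        rw [hbr.leibniz, hp, pderiv_mul]
        have hn : n = 0 ∨ n = 1 ∨ n = 2 := by revert n; decide
        rcases hn with rfl | rfl | rfl
        · rw [hself]
          simp only [pderiv_X_of_ne (show (0:Fin 3) ≠ 2 by decide), mul_zero, add_zero]
          ring
        · rw [hxy]
          simp only [pderiv_X_of_ne (show (1:Fin 3) ≠ 2 by decide), mul_zero, add_zero]
          ring
        · rw [bxz]
          simp only [pderiv_X_self, mul_one]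
          ring
    have brX1 : ∀ p, br (X 1) p = f * pderiv 2 p := by
      intro p
      induction p using MvPolynomial.induction_on with
      | C a => simp [hC]
      | add p q hp hq => rw [hsub, hp, hq, map_add]; ring
      | mul_X p n hp =>
        rw [hbr.leibniz, hp, pderiv_mul]
        have hn : n = 0 ∨ n = 1 ∨ n = 2 := by revert n; decide
        rcases hn with rfl | rfl | rfl
        · rw [byx]
          simp only [pderiv_X_of_ne (show (0:Fin 3) ≠ 2 by decide), mul_zero, add_zero]
          ring
        · rw [hself]
          simp only [pderiv_X_of_ne (show (1:Fin 3) ≠ 2 by decide), mul_zero, add_zero]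
          ring
        · rw [hyz]
          simp only [pderiv_X_self, mul_one]
          ring
    have jac := hbr.jacobi (X 0) (X 1) (X 2)
    rw [hyz, hzx, hxy, hzero, brX0, brX1] at jac
    have hrel : f * pderiv 2 g = g * pderiv 2 f := by linear_combination jac
    exact Stmt15Aux.factor f g hrel
  · rintro ⟨h, f₁, g₁, hf₁, hg₁, hf, hg⟩
    refine ⟨Stmt15Aux.pb f g, ?_, ?_, ?_, ?_⟩
    · constructor
      · intro a b c
        simp only [Stmt15Aux.pb, map_add]
        ring
      · intro r a b
        simp only [Stmt15Aux.pb, MvPolynomial.smul_eq_C_mul, pderiv_C_mul]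
        ring
      · intro a b
        simp only [Stmt15Aux.pb]
        ring
      · intro a b c
        rw [Stmt15Aux.jacobiator]
        have hdf₁ : pderiv 2 f₁ = 0 := Stmt15Aux.pderiv2_eq_zero_of_mem _ hf₁
        have hdg₁ : pderiv 2 g₁ = 0 := Stmt15Aux.pderiv2_eq_zero_of_mem _ hg₁
        have : f * pderiv 2 g - g * pderiv 2 f = 0 := by
          rw [hf, hg]
          simp only [pderiv_mul, hdf₁, hdg₁]
          ring
        rw [this, zero_mul]
      · intro a b c
        simp only [Stmt15Aux.pb, pderiv_mul]
        ring
    · simp [Stmt15Aux.pb, pderiv_X_self, pderiv_X_of_ne, show (1:Fin 3) ≠ 0 by decide,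
        show (2:Fin 3) ≠ 0 by decide, show (1:Fin 3) ≠ 2 by decide, show (2:Fin 3) ≠ 1 by decide]
    · simp [Stmt15Aux.pb, pderiv_X_self, pderiv_X_of_ne, show (0:Fin 3) ≠ 2 by decide,
        show (2:Fin 3) ≠ 0 by decide, show (0:Fin 3) ≠ 1 by decide, show (2:Fin 3) ≠ 1 by decide]
    · simp [Stmt15Aux.pb, pderiv_X_self, pderiv_X_of_ne, show (0:Fin 3) ≠ 2 by decide,
        show (1:Fin 3) ≠ 2 by decide, show (0:Fin 3) ≠ 1 by decide, show (1:Fin 3) ≠ 0 by decide]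
end

section
/- Let C be a commutative domain, δ a derivation of C[t] with δ(C) ⊆ C, C being δ|_C-simple, and δ(t) = at + b with a, b ∈ C. If there is no r ∈ C with δ(r) = ar + b, then C[t] is δ-simple. -/
open Polynomial

section Aux

variable {C : Type*} [CommRing C]
variable (δ : Derivation ℤ (Polynomial C) (Polynomial C)) (δ₀ : C → C)
variable (hres : ∀ c : C, δ (Polynomial.C c) = Polynomial.C (δ₀ c))

include hres

lemma myaux_add (x y : C) : δ₀ (x + y) = δ₀ x + δ₀ y := by
  apply Polynomial.C_injective
  rw [← hres, map_add, map_add, hres, hres, map_add]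

lemma myaux_zero : δ₀ 0 = 0 := by
  apply Polynomial.C_injective
  rw [← hres]
  simp

lemma myaux_one : δ₀ 1 = 0 := by
  apply Polynomial.C_injective
  rw [← hres, map_one, Derivation.map_one_eq_zero, map_zero]

lemma myaux_mul (x y : C) : δ₀ (x * y) = δ₀ x * y + x * δ₀ y := by
  apply Polynomial.C_injective
  rw [← hres, map_mul, Derivation.leibniz, smul_eq_mul, smul_eq_mul, hres, hres,
    map_add, map_mul, map_mul]
  ring

lemma myaux_neg (x : C) : δ₀ (-x) = -δ₀ x := by
  have h := myaux_add δ δ₀ hres x (-x)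
  rw [add_neg_cancel, myaux_zero δ δ₀ hres] at h
  exact eq_neg_of_add_eq_zero_right h.symm

lemma myaux_nat (m : ℕ) : δ₀ (m : C) = 0 := by
  induction m with
  | zero => exact_mod_cast myaux_zero δ δ₀ hres
  | succ m ih =>
    push_cast
    rw [myaux_add δ δ₀ hres, ih, myaux_one δ δ₀ hres, add_zero]

omit hres in
lemma myaux_pow (a b : C) (ht : δ Polynomial.X = Polynomial.C a * Polynomial.X + Polynomial.C b)
    (m : ℕ) :
    δ ((Polynomial.X : C[X]) ^ (m + 1)) =
      Polynomial.C a * ((m + 1) • Polynomial.X ^ (m + 1)) +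
        Polynomial.C b * ((m + 1) • Polynomial.X ^ m) := by
  induction m with
  | zero => simpa using ht
  | succ m ih =>
    have hx : ((Polynomial.X : C[X]) ^ (m + 2)) = Polynomial.X ^ (m + 1) * Polynomial.X := by
      ring
    rw [hx, Derivation.leibniz, smul_eq_mul, smul_eq_mul, ih, ht]
    simp only [nsmul_eq_mul]
    push_cast
    ring

lemma myaux_coeff (a b : C) (ht : δ Polynomial.X = Polynomial.C a * Polynomial.X + Polynomial.C b)
    (p : C[X]) (k : ℕ) :
    (δ p).coeff k = δ₀ (p.coeff k) + (k : C) * (a * p.coeff k)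
      + ((k : C) + 1) * (b * p.coeff (k + 1)) := by
  induction p using Polynomial.induction_on' with
  | add p q hp hq =>
    rw [map_add, coeff_add, hp, hq, coeff_add, coeff_add, myaux_add δ δ₀ hres]
    ring
  | monomial m c =>
    rcases m with _ | m
    · rw [Polynomial.monomial_zero_left, hres]
      simp only [Polynomial.coeff_C]
      rcases eq_or_ne k 0 with rfl | hk
      · norm_num
      · simp [hk, myaux_zero δ δ₀ hres]
    · rw [← Polynomial.C_mul_X_pow_eq_monomial, Derivation.leibniz, smul_eq_mul, smul_eq_mul,
        myaux_pow δ a b ht m, hres]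
      simp only [Polynomial.coeff_add, mul_add, Polynomial.coeff_C_mul, Polynomial.coeff_mul_C,
        Polynomial.coeff_smul, Polynomial.coeff_X_pow, smul_ite, smul_zero]
      split_ifs with h1 h2 h3 h4 h5 h6
      all_goals try omega
      all_goals try subst h1
      all_goals try subst h5
      all_goals simp only [nsmul_eq_mul, Nat.cast_one, mul_one, mul_zero, zero_mul,
        myaux_zero δ δ₀ hres, add_zero, zero_add]
      all_goals push_cast
      all_goals try ring

end Aux
theorem stmt_17 {C : Type*} [CommRing C] [IsDomain C] [CharZero C]
    (δ : Derivation ℤ (Polynomial C) (Polynomial C)) (δ₀ : C → C)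
    (hres : ∀ c : C, δ (Polynomial.C c) = Polynomial.C (δ₀ c))
    (hsimple : ∀ I : Ideal C, (∀ c ∈ I, δ₀ c ∈ I) → I = ⊥ ∨ I = ⊤)
    (a b : C) (ht : δ Polynomial.X = Polynomial.C a * Polynomial.X + Polynomial.C b)
    (hno : ∀ r : C, δ₀ r ≠ a * r + b) :
    ∀ I : Ideal (Polynomial C), (∀ p ∈ I, δ p ∈ I) → I = ⊥ ∨ I = ⊤ := by
  intro I hI
  by_cases hbot : I = ⊥
  · exact Or.inl hbot
  right
  have d0add := myaux_add δ δ₀ hres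
  have d0mul := myaux_mul δ δ₀ hres
  have d0zero := myaux_zero δ δ₀ hres
  have d0one := myaux_one δ δ₀ hres
  have d0nat := myaux_nat δ δ₀ hres
  have d0neg := myaux_neg δ δ₀ hres
  have hcoeff := myaux_coeff δ δ₀ hres a b ht
  -- every nonzero natural is invertible in C
  have hunit : ∀ m : ℕ, m ≠ 0 → ∃ v : C, (m : C) * v = 1 := by
    intro m hm
    have hstab : ∀ c ∈ Ideal.span {(m : C)}, δ₀ c ∈ Ideal.span {(m : C)} := by
      intro c hc
      rw [Ideal.mem_span_singleton'] at hc ⊢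
      obtain ⟨d, rfl⟩ := hc
      refine ⟨δ₀ d, ?_⟩
      rw [d0mul, d0nat, mul_zero, add_zero]
    rcases hsimple _ hstab with h | h
    · exfalso
      have hmem : (m : C) ∈ Ideal.span {(m : C)} := Ideal.mem_span_singleton_self _
      rw [h, Ideal.mem_bot] at hmem
      exact hm (Nat.cast_eq_zero.mp hmem)
    · have hone : (1 : C) ∈ Ideal.span {(m : C)} := h ▸ Submodule.mem_top
      rw [Ideal.mem_span_singleton'] at hone
      obtain ⟨v, hv⟩ := hone
      exact ⟨v, by rw [mul_comm]; exact hv⟩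
  -- minimal degree
  obtain ⟨p₀, hp₀I, hp₀⟩ := Submodule.exists_mem_ne_zero_of_ne_bot hbot
  set S : Set ℕ := {m | ∃ p ∈ I, p ≠ 0 ∧ p.natDegree = m} with hS
  have hSne : S.Nonempty := ⟨p₀.natDegree, p₀, hp₀I, hp₀, rfl⟩
  set n := sInf S with hn
  obtain ⟨pm, hpmI, hpm0, hpmd⟩ := Nat.sInf_mem hSne
  have hmin : ∀ q ∈ I, q ≠ 0 → n ≤ q.natDegree := fun q hq hq0 => Nat.sInf_le ⟨q, hq, hq0, rfl⟩
  -- the ideal of n-th coefficients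
  let J : Ideal C :=
    { carrier := {c | ∃ p ∈ I, p.natDegree ≤ n ∧ p.coeff n = c}
      add_mem' := by
        rintro x y ⟨p, hp, hdp, rfl⟩ ⟨q, hq, hdq, rfl⟩
        exact ⟨p + q, I.add_mem hp hq,
          (Polynomial.natDegree_add_le p q).trans (max_le hdp hdq),
          (Polynomial.coeff_add p q n)⟩
      zero_mem' := ⟨0, I.zero_mem, by simp, by simp⟩
      smul_mem' := by
        rintro c x ⟨p, hp, hdp, rfl⟩
        refine ⟨Polynomial.C c * p, I.mul_mem_left _ hp,
          (Polynomial.natDegree_C_mul_le c p).trans hdp, ?_⟩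
        rw [Polynomial.coeff_C_mul]
        rfl }
  have hJmem : ∀ c : C, c ∈ J ↔ ∃ p ∈ I, p.natDegree ≤ n ∧ p.coeff n = c := fun _ => Iff.rfl
  -- δ preserves degree ≤ n
  have hdeg : ∀ p : Polynomial C, p.natDegree ≤ n → (δ p).natDegree ≤ n := by
    intro p hp
    rw [Polynomial.natDegree_le_iff_coeff_eq_zero]
    intro m hm
    rw [hcoeff, Polynomial.coeff_eq_zero_of_natDegree_lt (lt_of_le_of_lt hp hm),
      Polynomial.coeff_eq_zero_of_natDegree_lt
        (lt_of_le_of_lt hp (hm.trans (Nat.lt_succ_self m)))]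
    simp [d0zero]
  -- J is δ₀-stable
  have hJstab : ∀ c ∈ J, δ₀ c ∈ J := by
    intro c hc
    obtain ⟨p, hpI, hpd, rfl⟩ := (hJmem c).mp hc
    have h1 : (δ p).coeff n = δ₀ (p.coeff n) + (n : C) * (a * p.coeff n) := by
      rw [hcoeff,
        Polynomial.coeff_eq_zero_of_natDegree_lt (lt_of_le_of_lt hpd (Nat.lt_succ_self n))]
      ring
    have h2 : (δ p).coeff n ∈ J := (hJmem _).mpr ⟨δ p, hI p hpI, hdeg p hpd, rfl⟩
    have h3 : ((n : C) * a) • p.coeff n ∈ J := J.smul_mem _ hc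
    have h4 := J.sub_mem h2 h3
    have h5 : (δ p).coeff n - ((n : C) * a) • p.coeff n = δ₀ (p.coeff n) := by
      rw [h1, smul_eq_mul]; ring
    rwa [h5] at h4
  -- J = ⊤, so there is p ∈ I of degree ≤ n with coeff n = 1
  have hJtop : J = ⊤ := by
    rcases hsimple J hJstab with h | h
    · exfalso
      have hmem : pm.coeff n ∈ J := (hJmem _).mpr ⟨pm, hpmI, hpmd.le, rfl⟩
      rw [h, Ideal.mem_bot] at hmem
      have : pm.leadingCoeff ≠ 0 := Polynomial.leadingCoeff_ne_zero.mpr hpm0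
      exact this (by rw [Polynomial.leadingCoeff, hpmd]; exact hmem)
    · exact h
  have h1J : (1 : C) ∈ J := hJtop ▸ Submodule.mem_top
  obtain ⟨p, hpI, hpd, hp1⟩ := (hJmem 1).mp h1J
  rcases Nat.eq_zero_or_pos n with hn0 | hnpos
  · -- n = 0 : p = 1 ∈ I
    have hp : p = Polynomial.C (p.coeff 0) :=
      Polynomial.eq_C_of_natDegree_le_zero (hn0 ▸ hpd)
    have hc0 : p.coeff 0 = 1 := by rw [← hn0]; exact hp1
    have : p = 1 := by rw [hp, hc0, map_one]
    exact Ideal.eq_top_iff_one I |>.mpr (this ▸ hpI)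
  · exfalso
    set k := n - 1 with hk
    have hnk : n = k + 1 := by omega
    set q := δ p - Polynomial.C ((n : C) * a) * p with hq
    have hqI : q ∈ I := I.sub_mem (hI p hpI) (I.mul_mem_left _ hpI)
    have hq0 : q = 0 := by
      by_contra h0
      have hge := hmin q hqI h0
      have hcq : ∀ m, n ≤ m → q.coeff m = 0 := by
        intro m hm
        rw [hq, Polynomial.coeff_sub, hcoeff, Polynomial.coeff_C_mul]
        rcases eq_or_lt_of_le hm with heq | hlt
        · rw [← heq, hp1,
            Polynomial.coeff_eq_zero_of_natDegree_lt (lt_of_le_of_lt hpd (Nat.lt_succ_self n))]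
          rw [d0one]
          ring
        · rw [Polynomial.coeff_eq_zero_of_natDegree_lt (lt_of_le_of_lt hpd hlt),
            Polynomial.coeff_eq_zero_of_natDegree_lt
              (lt_of_le_of_lt hpd (hlt.trans (Nat.lt_succ_self m))),
            d0zero]
          ring
      exact h0 (Polynomial.leadingCoeff_eq_zero.mp (hcq _ hge))
    have hrel : q.coeff k = 0 := by rw [hq0, Polynomial.coeff_zero]
    rw [hq, Polynomial.coeff_sub, hcoeff, Polynomial.coeff_C_mul] at hrel
    have hpk1 : p.coeff (k + 1) = 1 := by rw [← hnk]; exact hp1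
    rw [hpk1] at hrel
    set s := p.coeff k with hs
    have hds : δ₀ s = a * s - (n : C) * b := by
      have hcast : ((k : C) + 1) = (n : C) := by rw [hnk]; push_cast; ring
      rw [hcast] at hrel
      linear_combination hrel - a * s * hcast
    obtain ⟨v, hv⟩ := hunit n (by omega)
    have hd0v : δ₀ v = 0 := by
      have h1 : δ₀ ((n : C) * v) = 0 := by rw [hv, d0one]
      rw [d0mul, d0nat, zero_mul, zero_add] at h1
      have hn0 : ((n : C)) ≠ 0 := Nat.cast_ne_zero.mpr (by omega)
      exact (mul_eq_zero.mp h1).resolve_left hn0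
    have hcontra : δ₀ (-(s * v)) = a * (-(s * v)) + b := by
      rw [d0neg, d0mul, hd0v, hds]
      linear_combination b * hv
    exact hno _ hcontra
end

section
/- Let λ ∈ C be nonzero and let δ be the derivation of C[x,y] with δ(x) = 1 and δ(y) = 1 + λxy. Then C[x,y] is δ-simple; consequently C[x,y,z] with the Poisson bracket {x,y}=0, {z,x}=1, {y,z}=−(1+λxy) is Poisson simple. -/
open MvPolynomial

noncomputable section AuxPoisson18

/-- Conjugate a derivation along an algebra equivalence. -/
noncomputable def conjDer18 {R A B : Type*} [CommRing R] [CommRing A] [CommRing B]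
    [Algebra R A] [Algebra R B] (e : A ≃ₐ[R] B) (d : Derivation R A A) :
    Derivation R B B where
  toLinearMap := e.toLinearMap ∘ₗ d.toLinearMap ∘ₗ e.symm.toLinearMap
  map_one_eq_zero' := by simp
  leibniz' a b := by
    have h : d (e.symm a * e.symm b)
        = e.symm a * d (e.symm b) + e.symm b * d (e.symm a) := by
      rw [Derivation.leibniz, smul_eq_mul, smul_eq_mul]
    simp only [LinearMap.coe_comp, Function.comp_apply, AlgEquiv.toLinearMap_apply,
      Derivation.coeFn_coe, map_mul, h, map_add, AlgEquiv.apply_symm_apply, smul_eq_mul]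
    try ring

lemma conjDer18_apply {R A B : Type*} [CommRing R] [CommRing A] [CommRing B]
    [Algebra R A] [Algebra R B] (e : A ≃ₐ[R] B) (d : Derivation R A A) (b : B) :
    conjDer18 e d b = e (d (e.symm b)) := rfl

/-- Key lemma: δ-simplicity of ℂ[x,y]. -/
lemma core18 (lam : ℂ) (hlam : lam ≠ 0)
    (δ : Derivation ℂ (MvPolynomial (Fin 2) ℂ) (MvPolynomial (Fin 2) ℂ))
    (hx : δ (X 0) = 1) (hy : δ (X 1) = 1 + C lam * X 0 * X 1)
    (I : Ideal (MvPolynomial (Fin 2) ℂ)) (hI : ∀ p ∈ I, δ p ∈ I) :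
    I = ⊥ ∨ I = ⊤ := by
  classical
  by_cases hbot : I = ⊥
  · exact Or.inl hbot
  right
  rw [Ideal.eq_top_iff_one]
  -- the algebra equivalence ℂ[x,y] ≃ (ℂ[X])[Y], x ↦ C X, y ↦ Y
  set e1 : MvPolynomial (Fin 1) ℂ ≃ₐ[ℂ] Polynomial ℂ :=
    (renameEquiv ℂ ((Equiv.equivPUnit.{1,1} (Fin 1)) : Fin 1 ≃ PUnit.{1})).trans (pUnitAlgEquiv ℂ) with he1
  set Φ : MvPolynomial (Fin 2) ℂ ≃ₐ[ℂ] Polynomial (Polynomial ℂ) :=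
    ((renameEquiv ℂ (finSuccEquivLast)).trans (optionEquivLeft ℂ (Fin 1))).trans
      (Polynomial.mapAlgEquiv e1) with hΦdef
  have hfs0 : finSuccEquivLast (0 : Fin 2) = some 0 := by decide
  have hfs1 : finSuccEquivLast (1 : Fin 2) = none := by decide
  have hΦ0 : Φ (X 0) = Polynomial.C Polynomial.X := by
    rw [hΦdef]
    simp only [AlgEquiv.trans_apply, renameEquiv_apply, rename_X, hfs0,
      optionEquivLeft_X_some, Polynomial.coe_mapAlgEquiv, Polynomial.map_C]
    congr 1
    rw [he1]
    simp [pUnitAlgEquiv]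
  have hΦ1 : Φ (X 1) = Polynomial.X := by
    rw [hΦdef]
    simp only [AlgEquiv.trans_apply, renameEquiv_apply, rename_X, hfs1,
      optionEquivLeft_X_none, Polynomial.coe_mapAlgEquiv, Polynomial.map_X]
  set D : Derivation ℂ (Polynomial (Polynomial ℂ)) (Polynomial (Polynomial ℂ)) :=
    conjDer18 Φ δ with hDdef
  have hD : ∀ p, D (Φ p) = Φ (δ p) := by
    intro p; rw [hDdef, conjDer18_apply, AlgEquiv.symm_apply_apply]
  have hDCX : D (Polynomial.C Polynomial.X) = 1 := by
    rw [← hΦ0, hD, hx, map_one]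
  have hCC : ∀ a : ℂ, (Polynomial.C (Polynomial.C a) : Polynomial (Polynomial ℂ))
      = algebraMap ℂ _ a := by
    intro a
    simp [Polynomial.algebraMap_apply]
  have hDX : D Polynomial.X =
      1 + Polynomial.C (Polynomial.C lam * Polynomial.X) * Polynomial.X := by
    rw [← hΦ1, hD, hy]
    have hc : Φ (C lam) = Polynomial.C (Polynomial.C lam) := by
      rw [show (C lam : MvPolynomial (Fin 2) ℂ) = algebraMap ℂ _ lam from rfl,
        AlgEquiv.commutes, hCC]
    rw [map_add, map_one, map_mul, map_mul, hc, hΦ0, hΦ1, map_mul]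
  -- D on constants
  have hDC : ∀ f : Polynomial ℂ, D (Polynomial.C f) = Polynomial.C (Polynomial.derivative f) := by
    intro f
    induction f using Polynomial.induction_on with
    | C a => rw [hCC, Derivation.map_algebraMap, Polynomial.derivative_C, map_zero]
    | add p q hp hq => rw [map_add, map_add, hp, hq, map_add, map_add]
    | monomial n a hn =>
      rw [pow_succ, ← mul_assoc, map_mul, Derivation.leibniz, hn, hDCX]
      simp only [smul_eq_mul, mul_one, Polynomial.derivative_mul, Polynomial.derivative_X,
        Polynomial.derivative_C, Polynomial.derivative_X_pow, map_add, map_mul, zero_mul,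
        zero_add]
      ring
  -- coefficientwise formula for D
  have hDcoeff : ∀ (q : Polynomial (Polynomial ℂ)) (k : ℕ),
      (D q).coeff k = Polynomial.derivative (q.coeff k)
        + Polynomial.C (lam * k) * (Polynomial.X * q.coeff k)
        + Polynomial.C ((k : ℂ) + 1) * q.coeff (k + 1) := by
    intro q
    induction q using Polynomial.induction_on' with
    | add p q hp hq =>
      intro k
      simp only [map_add, Polynomial.coeff_add, hp k, hq k]
      ring
    | monomial n a =>
      intro k
      rw [← Polynomial.C_mul_X_pow_eq_monomial]
      rcases n with _ | m
      · rw [pow_zero, mul_one, hDC]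
        rcases k with _ | k
        · simp [Polynomial.coeff_C]
        · simp [Polynomial.coeff_C]
      · have hDm : D (Polynomial.C a * Polynomial.X ^ (m+1))
            = Polynomial.C (Polynomial.derivative a) * Polynomial.X ^ (m+1)
              + Polynomial.C (Polynomial.C ((m:ℂ)+1) * a) * Polynomial.X ^ m
              + Polynomial.C (Polynomial.C ((m:ℂ)+1) * (Polynomial.C lam * Polynomial.X * a))
                  * Polynomial.X ^ (m+1) := by
          rw [Derivation.leibniz, Derivation.leibniz_pow, hDX, hDC, Nat.add_sub_cancel,
            ← Nat.cast_smul_eq_nsmul ℂ]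
          simp only [smul_eq_mul]
          rw [Algebra.smul_def, ← hCC]
          push_cast
          simp only [map_mul, map_add, map_one]
          ring
        rw [hDm]
        simp only [Polynomial.coeff_add, Polynomial.coeff_C_mul_X_pow]
        split_ifs with h1 h2 h3 h4 h5 h6 h7 <;> try omega
        all_goals simp only [map_mul, map_add, map_one, Polynomial.derivative_zero,
          mul_zero, zero_mul, add_zero, zero_add]
        all_goals try rw [show k = m from by omega]
        all_goals try rw [show k = m + 1 from by omega]
        all_goals try push_cast
        all_goals try simp only [map_mul, map_add, map_one]
        all_goals ring
  -- transfer the ideal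
  set I' : Ideal (Polynomial (Polynomial ℂ)) :=
    Ideal.comap (Φ.symm.toAlgHom.toRingHom) I with hI'def
  have hmemI' : ∀ q, q ∈ I' ↔ Φ.symm q ∈ I := fun q => Iff.rfl
  have hstab : ∀ q ∈ I', D q ∈ I' := by
    intro q hq
    rw [hmemI', hDdef, conjDer18_apply, AlgEquiv.symm_apply_apply]
    exact hI _ ((hmemI' q).mp hq)
  obtain ⟨p₀, hp₀I, hp₀⟩ := (Submodule.ne_bot_iff I).mp hbot
  have hq₀ : Φ p₀ ∈ I' := by rw [hmemI', AlgEquiv.symm_apply_apply]; exact hp₀I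
  have hq₀ne : Φ p₀ ≠ 0 := by
    intro h; exact hp₀ (by simpa using congrArg Φ.symm h)
  have hex : ∃ k, ∃ q, q ∈ I' ∧ q ≠ 0 ∧ q.natDegree = k :=
    ⟨(Φ p₀).natDegree, Φ p₀, hq₀, hq₀ne, rfl⟩
  set n := Nat.find hex with hn
  obtain ⟨qmin, hqminI, hqminne, hqmindeg⟩ := Nat.find_spec hex
  have hmin : ∀ q, q ∈ I' → q ≠ 0 → n ≤ q.natDegree := by
    intro q h1 h2
    exact Nat.find_le ⟨q, h1, h2, rfl⟩
  -- the ideal of top coefficients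
  set J : Ideal (Polynomial ℂ) :=
    { carrier := {f | ∃ q, q ∈ I' ∧ q.natDegree ≤ n ∧ q.coeff n = f}
      add_mem' := by
        rintro a b ⟨qa, hqa, hda, rfl⟩ ⟨qb, hqb, hdb, rfl⟩
        exact ⟨qa + qb, I'.add_mem hqa hqb,
          (Polynomial.natDegree_add_le qa qb).trans (max_le hda hdb),
          by rw [Polynomial.coeff_add]⟩
      zero_mem' := ⟨0, I'.zero_mem, by simp, by simp⟩
      smul_mem' := by
        rintro f g ⟨q, hq, hd, rfl⟩
        refine ⟨Polynomial.C f * q, I'.mul_mem_left _ hq,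
          (Polynomial.natDegree_C_mul_le f q).trans hd, ?_⟩
        rw [Polynomial.coeff_C_mul]; rfl } with hJdef
  have hmemJ : ∀ f, f ∈ J ↔ ∃ q, q ∈ I' ∧ q.natDegree ≤ n ∧ q.coeff n = f :=
    fun f => Iff.rfl
  have hJstab : ∀ f ∈ J, Polynomial.derivative f
      + Polynomial.C (lam * n) * (Polynomial.X * f) ∈ J := by
    intro f hf
    obtain ⟨q, hq, hd, rfl⟩ := (hmemJ f).mp hf
    refine (hmemJ _).mpr ⟨D q, hstab q hq, ?_, ?_⟩
    · rw [Polynomial.natDegree_le_iff_coeff_eq_zero]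
      intro m hm
      have h1 : q.coeff m = 0 :=
        Polynomial.coeff_eq_zero_of_natDegree_lt (lt_of_le_of_lt hd hm)
      have h2 : q.coeff (m+1) = 0 :=
        Polynomial.coeff_eq_zero_of_natDegree_lt (lt_of_le_of_lt hd (by omega))
      rw [hDcoeff, h1, h2, map_zero, mul_zero, mul_zero, mul_zero, add_zero, add_zero]
    · have h2 : q.coeff (n+1) = 0 :=
        Polynomial.coeff_eq_zero_of_natDegree_lt (lt_of_le_of_lt hd (by omega))
      rw [hDcoeff, h2, mul_zero, add_zero]
  have hJne : J ≠ ⊥ := by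
    rw [Submodule.ne_bot_iff]
    have hdeg : qmin.natDegree = n := by rw [hqmindeg, hn]
    refine ⟨qmin.coeff n, (hmemJ _).mpr ⟨qmin, hqminI, hdeg.le, rfl⟩, ?_⟩
    rw [← hdeg]
    exact Polynomial.leadingCoeff_ne_zero.mpr hqminne
  -- J is principal, its generator is a nonzero constant, so 1 ∈ J
  have hJp : J.IsPrincipal := IsPrincipalIdealRing.principal J
  obtain ⟨g, hg⟩ := hJp.principal
  rw [Ideal.submodule_span_eq] at hg
  have hgJ : g ∈ J := by rw [hg]; exact Ideal.subset_span rfl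
  have hgne : g ≠ 0 := by
    rintro rfl
    exact hJne (by rw [hg, Ideal.span_singleton_eq_bot])
  have hgd : g ∣ Polynomial.derivative g := by
    have h1 : Polynomial.derivative g + Polynomial.C (lam * n) * (Polynomial.X * g) ∈ J :=
      hJstab g hgJ
    rw [hg, Ideal.mem_span_singleton] at h1
    have h2 : g ∣ Polynomial.C (lam * n) * (Polynomial.X * g) := ⟨Polynomial.C (lam * n) * Polynomial.X, by ring⟩
    simpa using (dvd_sub h1 h2)
  have hg' : Polynomial.derivative g = 0 := by
    by_contra h
    have h1 : g.natDegree ≤ (Polynomial.derivative g).natDegree :=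
      Polynomial.natDegree_le_of_dvd hgd h
    have h2 : g.natDegree ≠ 0 := by
      intro h0
      obtain ⟨c, rfl⟩ := Polynomial.natDegree_eq_zero.mp h0
      simp at h
    have h3 := Polynomial.natDegree_derivative_lt h2
    omega
  have hgdeg : g.natDegree = 0 := Polynomial.natDegree_eq_zero_of_derivative_eq_zero hg'
  obtain ⟨c, rfl⟩ := Polynomial.natDegree_eq_zero.mp hgdeg
  have hcne : c ≠ 0 := fun h => hgne (by rw [h, map_zero])
  have hJtop : J = ⊤ := by
    rw [hg, Ideal.span_singleton_eq_top, Polynomial.isUnit_C]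
    exact hcne.isUnit
  have h1J : (1 : Polynomial ℂ) ∈ J := by rw [hJtop]; trivial
  obtain ⟨p₁, hp₁I, hp₁d, hp₁c⟩ := (hmemJ 1).mp h1J
  have hp₁deg : p₁.natDegree = n :=
    le_antisymm hp₁d (Polynomial.le_natDegree_of_ne_zero (by rw [hp₁c]; exact one_ne_zero))
  -- now split on n
  by_cases hn0 : n = 0
  · -- n = 0 : p₁ is the constant 1
    rw [hn0] at hp₁d hp₁c
    have hp1 : p₁ = 1 := by
      have h0 := Polynomial.eq_C_of_natDegree_le_zero hp₁d
      rw [h0, hp₁c, map_one]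
    have h1I' : (1 : Polynomial (Polynomial ℂ)) ∈ I' := hp1 ▸ hp₁I
    simpa using (hmemI' 1).mp h1I'
  · -- n = m + 1 : derive a contradiction
    exfalso
    obtain ⟨m, hm⟩ : ∃ m, n = m + 1 := ⟨n - 1, by omega⟩
    set q : Polynomial (Polynomial ℂ) :=
      D p₁ - Polynomial.C (Polynomial.C (lam * (n : ℕ)) * Polynomial.X) * p₁ with hqdef
    have hqI : q ∈ I' := I'.sub_mem (hstab p₁ hp₁I) (I'.mul_mem_left _ hp₁I)
    have hqcoeff : ∀ k, q.coeff k = Polynomial.derivative (p₁.coeff k)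
        + Polynomial.C (lam * k) * (Polynomial.X * p₁.coeff k)
        + Polynomial.C ((k : ℂ) + 1) * p₁.coeff (k + 1)
        - Polynomial.C (lam * (n : ℕ)) * (Polynomial.X * p₁.coeff k) := by
      intro k
      rw [hqdef, Polynomial.coeff_sub, hDcoeff, Polynomial.coeff_C_mul, mul_assoc]
    have hqhi : ∀ k, n ≤ k → q.coeff k = 0 := by
      intro k hk
      rcases eq_or_lt_of_le hk with h | h
      · rw [hqcoeff, ← h, hp₁c,
          Polynomial.coeff_eq_zero_of_natDegree_lt (by omega : p₁.natDegree < n + 1)]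
        simp
      · rw [hqcoeff,
          Polynomial.coeff_eq_zero_of_natDegree_lt (by omega : p₁.natDegree < k),
          Polynomial.coeff_eq_zero_of_natDegree_lt (by omega : p₁.natDegree < k + 1)]
        simp
    have hq0 : q = 0 := by
      by_contra h
      have h1 := hmin q hqI h
      have h2 : q.coeff q.natDegree = 0 := hqhi q.natDegree h1
      exact Polynomial.leadingCoeff_ne_zero.mpr h h2
    -- look at coefficient m
    have hm0 : (0 : Polynomial ℂ) = Polynomial.derivative (p₁.coeff m)
        + Polynomial.C (lam * m) * (Polynomial.X * p₁.coeff m)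
        + Polynomial.C ((m : ℂ) + 1)
        - Polynomial.C (lam * ((m : ℂ) + 1)) * (Polynomial.X * p₁.coeff m) := by
      have h' := hqcoeff m
      rw [hq0, Polynomial.coeff_zero, show m + 1 = n from hm.symm, hp₁c, mul_one] at h'
      rw [hm] at h'
      push_cast at h' ⊢
      exact h'
    set f := p₁.coeff m with hfdef
    have hkey : Polynomial.derivative f + Polynomial.C ((m : ℂ) + 1)
        = Polynomial.C lam * (Polynomial.X * f) := by
      have h2 := hm0
      simp only [map_mul, map_add, map_one] at h2 ⊢
      linear_combination -h2
    have hfne : f ≠ 0 := by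
      intro h0
      rw [h0] at hkey
      simp only [map_zero, mul_zero, Polynomial.derivative_zero, zero_add] at hkey
      have hm1 : ((m : ℂ) + 1) ≠ 0 := Nat.cast_add_one_ne_zero m
      exact hm1 (Polynomial.C_eq_zero.mp hkey)
    -- degree contradiction
    have hXf : Polynomial.X * f ≠ 0 := mul_ne_zero Polynomial.X_ne_zero hfne
    have hdR : (Polynomial.C lam * (Polynomial.X * f)).natDegree = f.natDegree + 1 := by
      rw [Polynomial.natDegree_C_mul hlam, Polynomial.natDegree_mul Polynomial.X_ne_zero hfne,
        Polynomial.natDegree_X]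
      omega
    have hdL : (Polynomial.derivative f + Polynomial.C ((m : ℂ) + 1)).natDegree ≤ f.natDegree := by
      refine (Polynomial.natDegree_add_le _ _).trans (max_le ?_ ?_)
      · exact (Polynomial.natDegree_derivative_le f).trans (Nat.sub_le _ _)
      · rw [Polynomial.natDegree_C]
        exact Nat.zero_le _
    rw [hkey] at hdL
    omega

end AuxPoisson18

theorem stmt_18 (lam : ℂ) (hlam : lam ≠ 0)
    (δ : Derivation ℂ (MvPolynomial (Fin 2) ℂ) (MvPolynomial (Fin 2) ℂ))
    (hx : δ (X 0) = 1) (hy : δ (X 1) = 1 + C lam * X 0 * X 1) :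
    (∀ I : Ideal (MvPolynomial (Fin 2) ℂ), (∀ p ∈ I, δ p ∈ I) → I = ⊥ ∨ I = ⊤) ∧
      ∀ br : MvPolynomial (Fin 3) ℂ → MvPolynomial (Fin 3) ℂ → MvPolynomial (Fin 3) ℂ,
        IsPoissonBracket br →
        br (X 0) (X 1) = 0 → br (X 2) (X 0) = 1 →
        br (X 1) (X 2) = -(1 + C lam * X 0 * X 1) →
        ∀ I : Ideal (MvPolynomial (Fin 3) ℂ), IsPoissonIdeal br I → I = ⊥ ∨ I = ⊤ := by
  constructor
  · exact fun I hI => core18 lam hlam δ hx hy I hI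
  intro br hbr hxy hzx hyz I hPI
  classical
  by_cases hbot : I = ⊥
  · exact Or.inl hbot
  right
  rw [Ideal.eq_top_iff_one]
  -- basic facts about the bracket
  have add_r : ∀ a b c : MvPolynomial (Fin 3) ℂ, br a (b + c) = br a b + br a c := by
    intro a b c
    rw [hbr.antisymm, hbr.add_left, neg_add, ← hbr.antisymm, ← hbr.antisymm]
  have smul_r : ∀ (r : ℂ) (a b : MvPolynomial (Fin 3) ℂ), br a (r • b) = r • br a b := by
    intro r a b
    rw [hbr.antisymm, hbr.smul_left, ← smul_neg, ← hbr.antisymm]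
  have one_r : ∀ a : MvPolynomial (Fin 3) ℂ, br a 1 = 0 := by
    intro a
    have h := hbr.leibniz a 1 1
    rw [mul_one, one_mul, mul_one] at h
    have h' : br a 1 + 0 = br a 1 + br a 1 := by rw [add_zero]; exact h
    exact (add_left_cancel h').symm
  have C_r : ∀ (a : MvPolynomial (Fin 3) ℂ) (c : ℂ), br a (C c) = 0 := by
    intro a c
    rw [show (C c : MvPolynomial (Fin 3) ℂ) = c • (1 : MvPolynomial (Fin 3) ℂ) by
      rw [MvPolynomial.smul_eq_C_mul, mul_one], smul_r, one_r, smul_zero]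
  have self0 : ∀ a : MvPolynomial (Fin 3) ℂ, br a a = 0 := by
    intro a
    have h := hbr.antisymm a a
    have h2 : (2 : ℂ) • br a a = 0 := by
      rw [two_smul]
      nth_rewrite 2 [h]
      simp
    rcases smul_eq_zero.mp h2 with h3 | h3
    · norm_num at h3
    · exact h3
  have bxz : br (X 0) (X 2) = -1 := by rw [hbr.antisymm, hzx]
  have bzy : br (X 2) (X 1) = 1 + C lam * X 0 * X 1 := by rw [hbr.antisymm, hyz, neg_neg]
  -- the equivalence ℂ[x,y,z] ≃ (ℂ[x,y])[z]
  set Ψ : MvPolynomial (Fin 3) ℂ ≃ₐ[ℂ] Polynomial (MvPolynomial (Fin 2) ℂ) :=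
    (renameEquiv ℂ (finSuccEquivLast)).trans (optionEquivLeft ℂ (Fin 2)) with hΨdef
  have hfs0 : finSuccEquivLast (0 : Fin 3) = some 0 := by decide
  have hfs1 : finSuccEquivLast (1 : Fin 3) = some 1 := by decide
  have hfs2 : finSuccEquivLast (2 : Fin 3) = none := by decide
  have hΨ0 : Ψ (X 0) = Polynomial.C (X 0) := by
    rw [hΨdef]
    simp only [AlgEquiv.trans_apply, renameEquiv_apply, rename_X, hfs0, optionEquivLeft_X_some]
  have hΨ1 : Ψ (X 1) = Polynomial.C (X 1) := by
    rw [hΨdef]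
    simp only [AlgEquiv.trans_apply, renameEquiv_apply, rename_X, hfs1, optionEquivLeft_X_some]
  have hΨ2 : Ψ (X 2) = Polynomial.X := by
    rw [hΨdef]
    simp only [AlgEquiv.trans_apply, renameEquiv_apply, rename_X, hfs2, optionEquivLeft_X_none]
  have hs0 : Ψ.symm (Polynomial.C (X 0)) = X 0 := by rw [← hΨ0, AlgEquiv.symm_apply_apply]
  have hs1 : Ψ.symm (Polynomial.C (X 1)) = X 1 := by rw [← hΨ1, AlgEquiv.symm_apply_apply]
  have hsX : Ψ.symm Polynomial.X = X 2 := by rw [← hΨ2, AlgEquiv.symm_apply_apply]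
  have hsC : ∀ a : ℂ, Ψ.symm (Polynomial.C (C a)) = C a := by
    intro a
    have h1 : (Polynomial.C (C a) : Polynomial (MvPolynomial (Fin 2) ℂ))
        = algebraMap ℂ _ a := by
      rw [Polynomial.algebraMap_apply, MvPolynomial.algebraMap_eq]
    rw [h1, AlgEquiv.commutes, MvPolynomial.algebraMap_eq]
  -- transfer of the ideal
  set I'' : Ideal (Polynomial (MvPolynomial (Fin 2) ℂ)) :=
    Ideal.comap (Ψ.symm.toAlgHom.toRingHom) I with hI''def
  have hmem : ∀ q, q ∈ I'' ↔ Ψ.symm q ∈ I := fun q => Iff.rfl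
  -- br (X 0) is -d/dz
  have hbrx : ∀ p : MvPolynomial (Fin 3) ℂ,
      br (X 0) p = - Ψ.symm (Polynomial.derivative (Ψ p)) := by
    intro p
    induction p using MvPolynomial.induction_on with
    | C a =>
      have h1 : Ψ (C a) = Polynomial.C (C a) := by
        rw [show (C a : MvPolynomial (Fin 3) ℂ) = algebraMap ℂ _ a from rfl,
          AlgEquiv.commutes, Polynomial.algebraMap_apply, MvPolynomial.algebraMap_eq]
      rw [C_r, h1, Polynomial.derivative_C, map_zero, neg_zero]
    | add p q hp hq =>
      rw [add_r, hp, hq, map_add, Polynomial.derivative_add, map_add, neg_add]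
    | mul_X p i hp =>
      fin_cases i
      · show br (X 0) (p * X 0) = - Ψ.symm (Polynomial.derivative (Ψ (p * X 0)))
        rw [hbr.leibniz, self0, mul_zero, add_zero, hp, map_mul, hΨ0, Polynomial.derivative_mul,
          Polynomial.derivative_C, mul_zero, add_zero, map_mul, hs0]
        ring
      · show br (X 0) (p * X 1) = - Ψ.symm (Polynomial.derivative (Ψ (p * X 1)))
        rw [hbr.leibniz, hxy, mul_zero, add_zero, hp, map_mul, hΨ1, Polynomial.derivative_mul,
          Polynomial.derivative_C, mul_zero, add_zero, map_mul, hs1]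
        ring
      · show br (X 0) (p * X 2) = - Ψ.symm (Polynomial.derivative (Ψ (p * X 2)))
        rw [hbr.leibniz, bxz, hp, map_mul, hΨ2, Polynomial.derivative_mul, Polynomial.derivative_X,
          mul_one, map_add, map_mul, hsX, AlgEquiv.symm_apply_apply]
        ring
  have hstabd : ∀ q ∈ I'', Polynomial.derivative q ∈ I'' := by
    intro q hq
    have h := hbrx (Ψ.symm q)
    rw [AlgEquiv.apply_symm_apply] at h
    have h2 : Ψ.symm (Polynomial.derivative q) = -br (X 0) (Ψ.symm q) := by
      rw [h, neg_neg]
    rw [hmem, h2]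
    exact I.neg_mem (hPI _ _ ((hmem q).mp hq))
  have hCZ : CharZero (MvPolynomial (Fin 2) ℂ) :=
    charZero_of_injective_algebraMap
      (by rw [MvPolynomial.algebraMap_eq]; exact MvPolynomial.C_injective _ _)
  -- find a nonzero constant (in z) member of I''
  have hdesc : ∀ d : ℕ, ∀ q : Polynomial (MvPolynomial (Fin 2) ℂ), q ∈ I'' → q ≠ 0 →
      q.natDegree ≤ d → ∃ f : MvPolynomial (Fin 2) ℂ, f ≠ 0 ∧ Polynomial.C f ∈ I'' := by
    intro d
    induction d with
    | zero =>
      intro q hq hne hdeg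
      have h0 : q.natDegree = 0 := le_antisymm hdeg (Nat.zero_le _)
      obtain ⟨f, hf⟩ := Polynomial.natDegree_eq_zero.mp h0
      refine ⟨f, ?_, hf ▸ hq⟩
      rintro rfl
      exact hne (by rw [← hf, map_zero])
    | succ d ih =>
      intro q hq hne hdeg
      by_cases h0 : q.natDegree = 0
      · obtain ⟨f, hf⟩ := Polynomial.natDegree_eq_zero.mp h0
        refine ⟨f, ?_, hf ▸ hq⟩
        rintro rfl
        exact hne (by rw [← hf, map_zero])
      · have hne' : Polynomial.derivative q ≠ 0 := by
          intro hzero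
          have hco := Polynomial.coeff_derivative q (q.natDegree - 1)
          have hn1 : q.natDegree - 1 + 1 = q.natDegree := by omega
          rw [hn1, hzero, Polynomial.coeff_zero] at hco
          rcases mul_eq_zero.mp hco.symm with h3 | h3
          · exact Polynomial.leadingCoeff_ne_zero.mpr hne h3
          · exact Nat.cast_add_one_ne_zero _ h3
        have hdeg' : (Polynomial.derivative q).natDegree ≤ d := by
          have := Polynomial.natDegree_derivative_lt h0
          omega
        exact ih (Polynomial.derivative q) (hstabd q hq) hne' hdeg'
  obtain ⟨p₀, hp₀I, hp₀⟩ := (Submodule.ne_bot_iff I).mp hbot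
  have hq₀ : Ψ p₀ ∈ I'' := by rw [hmem, AlgEquiv.symm_apply_apply]; exact hp₀I
  have hq₀ne : Ψ p₀ ≠ 0 := by
    intro h; exact hp₀ (by simpa using congrArg Ψ.symm h)
  obtain ⟨f₀, hf₀ne, hf₀I⟩ := hdesc (Ψ p₀).natDegree (Ψ p₀) hq₀ hq₀ne le_rfl
  -- the two-variable ideal
  set J₂ : Ideal (MvPolynomial (Fin 2) ℂ) :=
    Ideal.comap (Polynomial.C : MvPolynomial (Fin 2) ℂ →+* _) I'' with hJ₂def
  have hmemJ₂ : ∀ f, f ∈ J₂ ↔ Polynomial.C f ∈ I'' := fun f => Iff.rfl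
  -- the two-variable derivation
  set δ₂ : Derivation ℂ (MvPolynomial (Fin 2) ℂ) (MvPolynomial (Fin 2) ℂ) :=
    MvPolynomial.mkDerivation ℂ
      (fun i : Fin 2 => if i = 0 then 1 else 1 + C lam * X 0 * X 1) with hδ₂def
  have hδ0 : δ₂ (X 0) = 1 := by rw [hδ₂def, MvPolynomial.mkDerivation_X]; simp
  have hδ1 : δ₂ (X 1) = 1 + C lam * X 0 * X 1 := by
    rw [hδ₂def, MvPolynomial.mkDerivation_X]
    norm_num
  have hδC : ∀ a : ℂ, δ₂ (C a) = 0 := by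
    intro a
    rw [show (C a : MvPolynomial (Fin 2) ℂ) = algebraMap ℂ _ a from rfl]
    exact Derivation.map_algebraMap δ₂ a
  have hρlam : Ψ.symm (Polynomial.C (1 + C lam * X 0 * X 1))
      = 1 + C lam * X 0 * X 1 := by
    have h1 : (Polynomial.C (1 + C lam * X 0 * X 1) : Polynomial (MvPolynomial (Fin 2) ℂ))
        = 1 + Polynomial.C (C lam) * Polynomial.C (X 0) * Polynomial.C (X 1) := by
      rw [map_add, map_one, map_mul, map_mul]
    rw [h1, map_add, map_one, map_mul, map_mul, hsC, hs0, hs1]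
  -- br (X 2) corresponds to δ₂ on constants
  have hbrz : ∀ f : MvPolynomial (Fin 2) ℂ,
      br (X 2) (Ψ.symm (Polynomial.C f)) = Ψ.symm (Polynomial.C (δ₂ f)) := by
    intro f
    induction f using MvPolynomial.induction_on with
    | C a => rw [hsC, C_r, hδC, map_zero, map_zero]
    | add p q hp hq => simp only [map_add, add_r, hp, hq]
    | mul_X p i hp =>
      fin_cases i
      · show br (X 2) (Ψ.symm (Polynomial.C (p * X 0)))
            = Ψ.symm (Polynomial.C (δ₂ (p * X 0)))
        rw [map_mul, map_mul, hbr.leibniz, hp, Derivation.leibniz, smul_eq_mul, smul_eq_mul,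
          map_add, map_mul, map_mul, map_add, map_mul, map_mul, hs0, hzx, hδ0, map_one, map_one]
        ring
      · show br (X 2) (Ψ.symm (Polynomial.C (p * X 1)))
            = Ψ.symm (Polynomial.C (δ₂ (p * X 1)))
        rw [map_mul, map_mul, hbr.leibniz, hp, Derivation.leibniz, smul_eq_mul, smul_eq_mul,
          map_add, map_mul, map_mul, map_add, map_mul, map_mul, hs1, bzy, hδ1, hρlam]
        ring
  have hJ₂stab : ∀ f ∈ J₂, δ₂ f ∈ J₂ := by
    intro f hf
    rw [hmemJ₂, hmem, ← hbrz]
    exact hPI _ _ ((hmem _).mp ((hmemJ₂ f).mp hf))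
  have hJ₂ne : J₂ ≠ ⊥ := by
    rw [Submodule.ne_bot_iff]
    exact ⟨f₀, (hmemJ₂ f₀).mpr hf₀I, hf₀ne⟩
  rcases core18 lam hlam δ₂ hδ0 hδ1 J₂ hJ₂stab with h | h
  · exact absurd h hJ₂ne
  · have h1 : (1 : MvPolynomial (Fin 2) ℂ) ∈ J₂ := by rw [h]; trivial
    have h2 : (1 : Polynomial (MvPolynomial (Fin 2) ℂ)) ∈ I'' := by
      have := (hmemJ₂ 1).mp h1
      rwa [map_one] at this
    have h3 := (hmem 1).mp h2
    rwa [map_one] at h3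
end
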